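/- arXiv:1402.1414 — 5 statements merged into one kernel-verified Lean document; each statement's English description precedes it below -/
import Mathlib

section
/- Let 0 < γ < α ≤ 1, let a < b, and let f : [a,b] → ℝ satisfy |f(u) − f(v)| ≤ H |u − v|^α for all u, v ∈ [a,b], where H ≥ 0. Then for every s ∈ (a,b], the left fractional derivative D_{a+}^γ f_a(s) is well defined (the integral in its definition converges absolutely) and |D_{a+}^γ f_a(s)| ≤ (H / Γ(1−γ)) (1 + γ/(α−γ)) (s − a)^{α−γ}. -/
open MeasureTheory intervalIntegral

/-- If `f` is α-Hölder with constant `H` on `[a,b]` and `0 < γ < α ≤ 1`, then for every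
`s ∈ (a,b]` the left fractional derivative
`D_{a+}^γ f_a(s) = (1/Γ(1-γ)) [ (f(s)-f(a))/(s-a)^γ + γ ∫_a^s (f(s)-f(y))/(s-y)^{γ+1} dy ]`
is well defined (the integral converges absolutely) and
`|D_{a+}^γ f_a(s)| ≤ (H/Γ(1-γ)) (1 + γ/(α-γ)) (s-a)^{α-γ}`. -/
theorem stmt_5 (α γ a b H : ℝ) (hγ0 : 0 < γ) (hγα : γ < α) (hα1 : α ≤ 1)
    (hab : a < b) (hH : 0 ≤ H) (f : ℝ → ℝ)
    (hf : ∀ u ∈ Set.Icc a b, ∀ v ∈ Set.Icc a b, |f u - f v| ≤ H * |u - v| ^ α)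
    (s : ℝ) (hs : s ∈ Set.Ioc a b) :
    IntervalIntegrable (fun y => (f s - f y) / (s - y) ^ (γ + 1)) volume a s ∧
    |(1 / Real.Gamma (1 - γ)) *
        ((f s - f a) / (s - a) ^ γ + γ * ∫ y in a..s, (f s - f y) / (s - y) ^ (γ + 1))|
      ≤ H / Real.Gamma (1 - γ) * (1 + γ / (α - γ)) * (s - a) ^ (α - γ) := by
  obtain ⟨has, hsb⟩ := hs
  have hT : 0 < s - a := sub_pos.2 has
  have hαγ : 0 < α - γ := sub_pos.2 hγα
  have hr : -1 < α - γ - 1 := by linarith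
  have hrne : α - γ - 1 ≠ 0 := by nlinarith
  have hΓ : 0 < Real.Gamma (1 - γ) := Real.Gamma_pos_of_pos (by linarith)
  have hsub : Set.Icc a s ⊆ Set.Icc a b := Set.Icc_subset_Icc le_rfl hsb
  have hsmem : s ∈ Set.Icc a b := ⟨has.le, hsb⟩
  -- continuity of f on [a,b]
  have hcont : ContinuousOn f (Set.Icc a b) := by
    intro x hx
    rw [ContinuousWithinAt, tendsto_iff_dist_tendsto_zero]
    have hb : Filter.Tendsto (fun y => H * dist y x ^ α) (nhdsWithin x (Set.Icc a b)) (nhds 0) := by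
      have h1 : Filter.Tendsto (fun y : ℝ => dist y x) (nhdsWithin x (Set.Icc a b)) (nhds 0) := by
        have := (continuous_id.dist (continuous_const (y := x))).tendsto x
        simpa using this.mono_left nhdsWithin_le_nhds
      have h2 : Filter.Tendsto (fun t : ℝ => H * t ^ α) (nhds 0) (nhds 0) := by
        have hc : ContinuousAt (fun t : ℝ => t ^ α) 0 :=
          Real.continuousAt_rpow_const 0 α (Or.inr (by linarith))
        have := hc.tendsto.const_mul H
        simpa [Real.zero_rpow (show α ≠ 0 from ne_of_gt (by linarith))] using this
      exact h2.comp h1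
    refine squeeze_zero' (Filter.Eventually.of_forall fun y => dist_nonneg) ?_ hb
    filter_upwards [self_mem_nhdsWithin] with y hy
    have := hf y hy x hx
    simpa [Real.dist_eq] using this
  -- integrability of the dominating function
  have hφ : IntervalIntegrable (fun y => H * (s - y) ^ (α - γ - 1)) volume a s := by
    have h1 : IntervalIntegrable (fun x : ℝ => x ^ (α - γ - 1)) volume 0 (s - a) :=
      intervalIntegral.intervalIntegrable_rpow' hr
    have h2 := (h1.comp_sub_left s).const_mul H
    have e1 : s - (s - a) = a := by ring
    have e2 : s - 0 = s := by ring
    rw [e1, e2] at h2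
    exact h2.symm
  -- pointwise bound
  have hbound : ∀ y ∈ Set.Icc a s,
      |(f s - f y) / (s - y) ^ (γ + 1)| ≤ H * (s - y) ^ (α - γ - 1) := by
    intro y hy
    rcases eq_or_lt_of_le hy.2 with h | h
    · rw [h]
      simp [Real.zero_rpow hrne]
    · have hsy : 0 < s - y := sub_pos.2 h
      have hd : 0 < (s - y) ^ (γ + 1) := Real.rpow_pos_of_pos hsy _
      rw [abs_div, abs_of_pos hd, div_le_iff₀ hd]
      have hfy : |f s - f y| ≤ H * (s - y) ^ α := by
        have := hf s hsmem y (hsub ⟨hy.1, hy.2⟩)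
        simpa [abs_of_pos hsy] using this
      refine hfy.trans (le_of_eq ?_)
      rw [mul_assoc, ← Real.rpow_add hsy]
      ring_nf
    -- done
  -- integrability of the integrand
  have hint : IntervalIntegrable (fun y => (f s - f y) / (s - y) ^ (γ + 1)) volume a s := by
    rw [intervalIntegrable_iff_integrableOn_Ioc_of_le has.le,
      integrableOn_Ioc_iff_integrableOn_Ioo]
    have hφ' : IntegrableOn (fun y => H * (s - y) ^ (α - γ - 1)) (Set.Ioo a s) volume :=
      ((intervalIntegrable_iff_integrableOn_Ioc_of_le has.le).1 hφ).mono_set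
        Set.Ioo_subset_Ioc_self
    have hgc : ContinuousOn (fun y => (f s - f y) / (s - y) ^ (γ + 1)) (Set.Ioo a s) := by
      apply ContinuousOn.div
      · exact continuousOn_const.sub (hcont.mono (fun y hy => hsub ⟨hy.1.le, hy.2.le⟩))
      · exact (continuousOn_const.sub continuousOn_id).rpow_const
          (fun x hx => Or.inl (sub_pos.2 hx.2).ne')
      · exact fun x hx => (Real.rpow_pos_of_pos (sub_pos.2 hx.2) _).ne'
    refine Integrable.mono' hφ' (hgc.aestronglyMeasurable measurableSet_Ioo) ?_
    filter_upwards [ae_restrict_mem measurableSet_Ioo] with y hy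
    rw [Real.norm_eq_abs]
    exact hbound y ⟨hy.1.le, hy.2.le⟩
  refine ⟨hint, ?_⟩
  -- value of the dominating integral
  have hval : (∫ y in a..s, H * (s - y) ^ (α - γ - 1)) = H * ((s - a) ^ (α - γ) / (α - γ)) := by
    rw [intervalIntegral.integral_const_mul]
    congr 1
    have := intervalIntegral.integral_comp_sub_left (a := a) (b := s)
      (fun x : ℝ => x ^ (α - γ - 1)) s
    rw [this, sub_self]
    rw [integral_rpow (Or.inl hr)]
    rw [Real.zero_rpow (by linarith : α - γ - 1 + 1 ≠ 0)]
    ring_nf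
  -- bound for the integral term
  have hI : |∫ y in a..s, (f s - f y) / (s - y) ^ (γ + 1)|
      ≤ H * ((s - a) ^ (α - γ) / (α - γ)) := by
    calc |∫ y in a..s, (f s - f y) / (s - y) ^ (γ + 1)|
        ≤ ∫ y in a..s, |(f s - f y) / (s - y) ^ (γ + 1)| :=
          intervalIntegral.abs_integral_le_integral_abs has.le
      _ ≤ ∫ y in a..s, H * (s - y) ^ (α - γ - 1) :=
          intervalIntegral.integral_mono_on has.le hint.abs hφ hbound
      _ = H * ((s - a) ^ (α - γ) / (α - γ)) := hval
  -- bound for the first term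
  have hA : |(f s - f a) / (s - a) ^ γ| ≤ H * (s - a) ^ (α - γ) := by
    have hd : 0 < (s - a) ^ γ := Real.rpow_pos_of_pos hT _
    rw [abs_div, abs_of_pos hd, div_le_iff₀ hd]
    have hfa : |f s - f a| ≤ H * (s - a) ^ α := by
      have := hf s hsmem a ⟨le_rfl, hab.le⟩
      simpa [abs_of_pos hT] using this
    refine hfa.trans (le_of_eq ?_)
    rw [mul_assoc, ← Real.rpow_add hT]
    ring_nf
  -- assemble
  rw [abs_mul, abs_of_pos (by positivity : (0:ℝ) < 1 / Real.Gamma (1 - γ))]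
  have hsum : |(f s - f a) / (s - a) ^ γ +
      γ * ∫ y in a..s, (f s - f y) / (s - y) ^ (γ + 1)|
      ≤ H * (s - a) ^ (α - γ) + γ * (H * ((s - a) ^ (α - γ) / (α - γ))) := by
    refine (abs_add_le _ _).trans ?_
    have : |γ * ∫ y in a..s, (f s - f y) / (s - y) ^ (γ + 1)|
        = γ * |∫ y in a..s, (f s - f y) / (s - y) ^ (γ + 1)| := by
      rw [abs_mul, abs_of_pos hγ0]
    rw [this]
    exact add_le_add hA (mul_le_mul_of_nonneg_left hI hγ0.le)
  calc 1 / Real.Gamma (1 - γ) * |(f s - f a) / (s - a) ^ γ +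
        γ * ∫ y in a..s, (f s - f y) / (s - y) ^ (γ + 1)|
      ≤ 1 / Real.Gamma (1 - γ) *
        (H * (s - a) ^ (α - γ) + γ * (H * ((s - a) ^ (α - γ) / (α - γ)))) :=
        mul_le_mul_of_nonneg_left hsum (by positivity)
    _ = H / Real.Gamma (1 - γ) * (1 + γ / (α - γ)) * (s - a) ^ (α - γ) := by
        field_simp
end

section
/- Let γ ∈ (0,1), let m ≥ 1 be an integer, set t_l = l/m, and let N ≥ 2 be an integer, b = t_N. Let g : [0, t_N] → ℝ be a step function with g(s) = g(t_{l−1}) for all s ∈ [t_{l−1}, t_l), 1 ≤ l ≤ N. Then for every integer k with 1 ≤ k ≤ N−1 and every s ∈ (t_{k−1}, t_k): D_{b−}^{1−γ} g_{b−}(s) = (1/Γ(γ)) [ (g(t_{k−1}) − g(t_{N−1})) (t_N − s)^{γ−1} − Σ_{l=k+1}^{N} (g(t_{k−1}) − g(t_{l−1})) ( (t_l − s)^{γ−1} − (t_{l−1} − s)^{γ−1} ) ]. -/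
open MeasureTheory intervalIntegral

noncomputable def Dright (γ b gb : ℝ) (g : ℝ → ℝ) (s : ℝ) : ℝ :=
  (1 / Real.Gamma γ) *
    ((g s - gb) / (b - s) ^ (1 - γ) + (1 - γ) * ∫ y in s..b, (g s - g y) / (y - s) ^ (2 - γ))

lemma ae_ne' (q : ℝ) : ∀ᵐ y : ℝ, y ≠ q := by
  rw [MeasureTheory.ae_iff]
  simp

/-- on a piece where numerator vanishes, integrand is a.e. 0 on the interval -/
lemma piece_zero_ae (γ s q d : ℝ) (hsq : s ≤ q) (g : ℝ → ℝ)
    (hgc : ∀ y ∈ Set.Ioo s q, d - g y = 0) :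
    ∀ᵐ y : ℝ, y ∈ Set.uIoc s q → (d - g y) / (y - s) ^ (2 - γ) = 0 := by
  filter_upwards [ae_ne' q] with y hy hmem
  rw [Set.uIoc_of_le hsq] at hmem
  have hyo : y ∈ Set.Ioo s q := ⟨hmem.1, lt_of_le_of_ne hmem.2 hy⟩
  rw [hgc y hyo, zero_div]

lemma piece_ae (γ s c d p q : ℝ) (hsp : s < p) (hpq : p ≤ q) (g : ℝ → ℝ)
    (hgc : ∀ y ∈ Set.Ioo p q, g y = c) :
    ∀ᵐ y : ℝ, y ∈ Set.uIoc p q → (d - g y) / (y - s) ^ (2 - γ) = (d - c) * (y - s) ^ (γ - 2) := by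
  filter_upwards [ae_ne' q] with y hy hmem
  rw [Set.uIoc_of_le hpq] at hmem
  have hyo : y ∈ Set.Ioo p q := ⟨hmem.1, lt_of_le_of_ne hmem.2 hy⟩
  have hys : (0:ℝ) < y - s := by have := hyo.1; linarith
  have he : γ - 2 = -(2 - γ) := by ring
  rw [hgc y hyo, he, Real.rpow_neg hys.le, div_eq_mul_inv]

lemma cont_piece (γ s p q c d : ℝ) (hsp : s < p) (hpq : p ≤ q) :
    ContinuousOn (fun y : ℝ => (d - c) * (y - s) ^ (γ - 2)) (Set.uIcc p q) := by
  intro y hy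
  rw [Set.uIcc_of_le hpq] at hy
  have hys : (0:ℝ) < y - s := by have := hy.1; linarith
  exact ContinuousAt.continuousWithinAt
    (((continuous_sub_right s).continuousAt.rpow_const (Or.inl hys.ne')).const_mul _)

lemma piece_integrable (γ s c d p q : ℝ) (hsp : s < p) (hpq : p ≤ q) (g : ℝ → ℝ)
    (hgc : ∀ y ∈ Set.Ioo p q, g y = c) :
    IntervalIntegrable (fun y => (d - g y) / (y - s) ^ (2 - γ)) volume p q := by
  have hc := (cont_piece γ s p q c d hsp hpq).intervalIntegrable (μ := volume)
  rw [intervalIntegrable_iff] at hc ⊢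
  refine hc.congr ?_
  have := (ae_restrict_iff' (μ := volume) measurableSet_uIoc).mpr (piece_ae γ s c d p q hsp hpq g hgc)
  filter_upwards [this] with y hy
  exact (hy).symm

lemma piece_integral (γ s c d p q : ℝ) (hγ1 : γ < 1) (hsp : s < p) (hpq : p ≤ q) (g : ℝ → ℝ)
    (hgc : ∀ y ∈ Set.Ioo p q, g y = c) :
    ∫ y in p..q, (d - g y) / (y - s) ^ (2 - γ)
      = (d - c) * (((q - s) ^ (γ - 1) - (p - s) ^ (γ - 1)) / (γ - 1)) := by
  rw [intervalIntegral.integral_congr_ae (piece_ae γ s c d p q hsp hpq g hgc)]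
  rw [intervalIntegral.integral_const_mul]
  have h1 : (∫ y in p..q, (y - s) ^ (γ - 2)) = ∫ y in (p-s)..(q-s), y ^ (γ - 2) :=
    intervalIntegral.integral_comp_sub_right (fun y => y ^ (γ - 2)) s
  rw [h1, integral_rpow (Or.inr ⟨by intro h; apply absurd hγ1; simp; linarith [sub_eq_iff_eq_add.mp h],
    Set.notMem_uIcc_of_lt (by linarith) (by linarith)⟩)]
  rw [show γ - 2 + 1 = γ - 1 from by ring]

lemma piece_zero_integrable (γ s q d : ℝ) (hsq : s ≤ q) (g : ℝ → ℝ)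
    (hgc : ∀ y ∈ Set.Ioo s q, d - g y = 0) :
    IntervalIntegrable (fun y => (d - g y) / (y - s) ^ (2 - γ)) volume s q := by
  rw [intervalIntegrable_iff]
  have := (ae_restrict_iff' (μ := volume) measurableSet_uIoc).mpr (piece_zero_ae γ s q d hsq g hgc)
  exact (integrable_zero _ _ _).congr (by filter_upwards [this] with y hy; exact hy.symm)

lemma piece_zero_integral (γ s q d : ℝ) (hsq : s ≤ q) (g : ℝ → ℝ)
    (hgc : ∀ y ∈ Set.Ioo s q, d - g y = 0) :
    ∫ y in s..q, (d - g y) / (y - s) ^ (2 - γ) = 0 := by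
  rw [intervalIntegral.integral_congr_ae (piece_zero_ae γ s q d hsq g hgc)]
  simp

/-- For a step function `g` constant on each `[t_{l-1}, t_l)` with `t_l = l/m`, `b = t_N`,
for `1 ≤ k ≤ N-1` and `s ∈ (t_{k-1}, t_k)`:
`D_{b-}^{1-γ} g_{b-}(s) = (1/Γ(γ)) [ (g(t_{k-1}) - g(t_{N-1})) (t_N - s)^{γ-1}
  - ∑_{l=k+1}^N (g(t_{k-1}) - g(t_{l-1})) ((t_l - s)^{γ-1} - (t_{l-1} - s)^{γ-1}) ]`. -/
theorem stmt_7 (γ : ℝ) (hγ0 : 0 < γ) (hγ1 : γ < 1) (m N : ℕ) (hm : 1 ≤ m) (hN : 2 ≤ N)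
    (g : ℝ → ℝ)
    (hg : ∀ l : ℕ, 1 ≤ l → l ≤ N →
      ∀ x ∈ Set.Ico (((l : ℝ) - 1) / m) ((l : ℝ) / m), g x = g (((l : ℝ) - 1) / m))
    (k : ℕ) (hk1 : 1 ≤ k) (hkN : k ≤ N - 1)
    (s : ℝ) (hs : s ∈ Set.Ioo (((k : ℝ) - 1) / m) ((k : ℝ) / m)) :
    Dright γ ((N : ℝ) / m) (g (((N : ℝ) - 1) / m)) g s =
      (1 / Real.Gamma γ) *
        ((g (((k : ℝ) - 1) / m) - g (((N : ℝ) - 1) / m)) * ((N : ℝ) / m - s) ^ (γ - 1)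
          - ∑ l ∈ Finset.Icc (k + 1) N,
              (g (((k : ℝ) - 1) / m) - g (((l : ℝ) - 1) / m)) *
                (((l : ℝ) / m - s) ^ (γ - 1) - (((l : ℝ) - 1) / m - s) ^ (γ - 1))) := by
  have hm0 : (0:ℝ) < m := by exact_mod_cast hm
  have hkN' : k < N := by omega
  set d := g (((k : ℝ) - 1) / m) with hd
  have hgs : g s = d := hg k hk1 hkN'.le s ⟨hs.1.le, hs.2⟩
  set a : ℕ → ℝ := fun i => if i = 0 then s else ((k + i - 1 : ℕ) : ℝ) / m with ha
  set n : ℕ := N - k + 1 with hn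
  have ha0 : a 0 = s := rfl
  have han : a n = (N : ℝ) / m := by
    simp only [ha, hn]
    rw [if_neg (by omega)]
    congr 2
    push_cast [show k + (N - k + 1) - 1 = N by omega]
    ring
  have hsk : s < ((k:ℝ)) / m := hs.2
  have ha1 : a 1 = ((k:ℝ)) / m := by
    simp only [ha]; norm_num
  have haval : ∀ i : ℕ, 1 ≤ i → a i = ((k:ℝ) + i - 1) / m := by
    intro i hi
    simp only [ha]; rw [if_neg (by omega)]
    congr 1; push_cast [show (1:ℕ) ≤ k + i by omega]; ring
  have hgzero : ∀ y ∈ Set.Ioo s (((k:ℝ))/m), d - g y = 0 := by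
    intro y hy
    rw [hg k hk1 hkN'.le y ⟨le_of_lt (lt_trans hs.1 hy.1), hy.2⟩]
    simp [hd]
  have hpiece : ∀ i : ℕ, 1 ≤ i → s < a i ∧ a i ≤ a (i+1) := by
    intro i hi1
    have hai := haval i hi1
    have hai1 := haval (i+1) (by omega)
    have hic : (1:ℝ) ≤ (i:ℝ) := by exact_mod_cast hi1
    constructor
    · rw [hai]
      refine lt_of_lt_of_le hsk ?_
      gcongr <;> linarith
    · rw [hai, hai1]; push_cast; gcongr <;> linarith
  have hgconst : ∀ i : ℕ, 1 ≤ i → i ≤ N - k →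
      ∀ y ∈ Set.Ioo (a i) (a (i+1)), g y = g (((k:ℝ) + i - 1) / m) := by
    intro i hi1 hi2 y hy
    rw [haval i hi1, haval (i+1) (by omega)] at hy
    rw [show ((k:ℝ) + (((i+1:ℕ)):ℝ) - 1) = (k:ℝ) + (i:ℝ) from by push_cast; ring] at hy
    have hmem : y ∈ Set.Ico ((((k + i : ℕ) : ℝ) - 1) / m) (((k + i : ℕ) : ℝ) / m) := by
      push_cast
      push_cast at hy
      exact ⟨hy.1.le, hy.2⟩
    have := hg (k+i) (by omega) (by omega) y hmem
    rw [this]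
    push_cast
    ring_nf
  have hint : ∀ i < n, IntervalIntegrable (fun y => (d - g y) / (y - s) ^ (2 - γ))
      volume (a i) (a (i+1)) := by
    intro i hi
    rcases Nat.eq_zero_or_pos i with rfl | hi1
    · rw [ha0, ha1]
      exact piece_zero_integrable γ s _ d hsk.le g hgzero
    · exact piece_integrable γ s _ d _ _ (hpiece i hi1).1 (hpiece i hi1).2 g
        (hgconst i hi1 (by omega))
  have hsum := intervalIntegral.sum_integral_adjacent_intervals (μ := volume) hint
  rw [ha0, han] at hsum
  have hval : ∑ i ∈ Finset.range n, (∫ y in a i..a (i+1), (d - g y) / (y - s) ^ (2 - γ))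
      = ∑ l ∈ Finset.Icc (k+1) N, (d - g (((l:ℝ) - 1) / m)) *
          ((((l:ℝ)/m - s) ^ (γ-1) - (((l:ℝ) - 1)/m - s) ^ (γ-1)) / (γ - 1)) := by
    rw [hn, Finset.sum_range_succ']
    have hJ0 : (∫ y in (a 0)..(a (0+1)), (d - g y) / (y - s) ^ (2 - γ)) = 0 := by
      rw [ha0, show a (0+1) = ((k:ℝ))/m from ha1]
      exact piece_zero_integral γ s _ d hsk.le g hgzero
    rw [hJ0, add_zero]
    rw [← Finset.Ico_add_one_right_eq_Icc, Finset.sum_Ico_eq_sum_range,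
      show N + 1 - (k+1) = N - k by omega]
    refine Finset.sum_congr rfl fun i hi => ?_
    rw [Finset.mem_range] at hi
    rw [piece_integral γ s _ d _ _ hγ1 (hpiece (i+1) (by omega)).1 (hpiece (i+1) (by omega)).2 g
      (hgconst (i+1) (by omega) (by omega))]
    rw [haval (i+1) (by omega), haval (i+2) (by omega)]
    push_cast
    ring_nf
  rw [hval] at hsum
  unfold Dright
  rw [hgs, ← hsum]
  congr 1
  have hkNr : ((k:ℝ)) / m ≤ (N:ℝ) / m := by
    have hc : (k:ℝ) ≤ (N:ℝ) := by exact_mod_cast hkN'.le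
    gcongr
  have hbs : (0:ℝ) < (N:ℝ)/m - s := by linarith
  rw [show (d - g (((N:ℝ) - 1)/m)) / ((N:ℝ)/m - s) ^ (1-γ)
      = (d - g (((N:ℝ) - 1)/m)) * ((N:ℝ)/m - s) ^ (γ-1) from by
    rw [show γ - 1 = -(1-γ) by ring, Real.rpow_neg hbs.le, div_eq_mul_inv]]
  have hγne : γ - 1 ≠ 0 := sub_ne_zero_of_ne hγ1.ne
  have hmulsum : (1 - γ) * ∑ l ∈ Finset.Icc (k+1) N, (d - g (((l:ℝ) - 1) / m)) *
          ((((l:ℝ)/m - s) ^ (γ-1) - (((l:ℝ) - 1)/m - s) ^ (γ-1)) / (γ - 1))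
      = -∑ l ∈ Finset.Icc (k+1) N, (d - g (((l:ℝ) - 1) / m)) *
          ((((l:ℝ)/m - s) ^ (γ-1) - (((l:ℝ) - 1)/m - s) ^ (γ-1))) := by
    rw [Finset.mul_sum, ← Finset.sum_neg_distrib]
    refine Finset.sum_congr rfl fun l hl => ?_
    field_simp
    ring
  rw [hmulsum]
  ring
end

section
/- Let γ ∈ (0,1). There exists a constant C > 0 depending only on γ such that for every integer m ≥ 1, every integer N ≥ 2 with b = t_N (where t_l = l/m), every step function g : [0, t_N] → ℝ with g(s) = g(t_{l−1}) for s ∈ [t_{l−1}, t_l), and every integer k with 1 ≤ k ≤ N−1: ∫_{t_{k−1}}^{t_k} |D_{b−}^{1−γ} g_{b−}(s)| ds ≤ C m^{−γ} [ Σ_{l=k+1}^{N} |g(t_{k−1}) − g(t_{l−1})| · |(l−1−k)^γ − 2(l−k)^γ + (l−k+1)^γ| + |g(t_{k−1}) − g(t_{N−1})| ( (N−k+1)^γ − (N−k)^γ ) ]. -/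
open MeasureTheory intervalIntegral

set_option maxHeartbeats 1000000

private lemma ae_imp_of_Ioo {a b : ℝ} {p : ℝ → Prop} (h : ∀ y ∈ Set.Ioo a b, p y) :
    ∀ᵐ x ∂(volume : Measure ℝ), x ∈ Set.Ioc a b → p x := by
  have hb : ∀ᵐ x ∂(volume : Measure ℝ), x ≠ b := by
    simpa using (MeasureTheory.measure_eq_zero_iff_ae_notMem.1 (measure_singleton b))
  filter_upwards [hb] with x hx hmem
  exact h x ⟨hmem.1, lt_of_le_of_ne hmem.2 hx⟩

private lemma integral_congr_Ioo {f g : ℝ → ℝ} {a b : ℝ} (hab : a ≤ b)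
    (h : ∀ y ∈ Set.Ioo a b, f y = g y) :
    ∫ x in a..b, f x = ∫ x in a..b, g x := by
  refine intervalIntegral.integral_congr_ae ?_
  rw [Set.uIoc_of_le hab]
  exact ae_imp_of_Ioo h

private lemma intervalIntegrable_congr_Ioo {f g : ℝ → ℝ} {a b : ℝ} (hab : a ≤ b)
    (h : ∀ y ∈ Set.Ioo a b, f y = g y) (hf : IntervalIntegrable f volume a b) :
    IntervalIntegrable g volume a b := by
  refine hf.congr_ae ?_
  rw [Set.uIoc_of_le hab]
  exact (ae_restrict_iff' measurableSet_Ioc).2 (ae_imp_of_Ioo h)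

private lemma integral_mono_Ioo {f g : ℝ → ℝ} {a b : ℝ} (hab : a ≤ b)
    (hf : IntervalIntegrable f volume a b) (hg : IntervalIntegrable g volume a b)
    (h : ∀ x ∈ Set.Ioo a b, f x ≤ g x) :
    ∫ x in a..b, f x ≤ ∫ x in a..b, g x := by
  refine intervalIntegral.integral_mono_ae_restrict hab hf hg ?_
  refine (ae_restrict_iff' measurableSet_Icc).2 ?_
  have ha : ∀ᵐ x ∂(volume : Measure ℝ), x ≠ a := by
    simpa using (MeasureTheory.measure_eq_zero_iff_ae_notMem.1 (measure_singleton a))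
  have hb : ∀ᵐ x ∂(volume : Measure ℝ), x ≠ b := by
    simpa using (MeasureTheory.measure_eq_zero_iff_ae_notMem.1 (measure_singleton b))
  filter_upwards [ha, hb] with x hxa hxb hmem
  exact h x ⟨lt_of_le_of_ne hmem.1 (Ne.symm hxa), lt_of_le_of_ne hmem.2 hxb⟩

private lemma kernel_intable {γ : ℝ} (hγ : -1 < γ - 1) (a b c : ℝ) :
    IntervalIntegrable (fun s => (c - s) ^ (γ - 1)) volume a b := by
  simpa using (intervalIntegral.intervalIntegrable_rpow' (a := c - a) (b := c - b) hγ).comp_sub_left c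

private lemma kernel_int {γ : ℝ} (hγ : -1 < γ - 1) (a b c : ℝ) :
    ∫ s in a..b, (c - s) ^ (γ - 1) = ((c - a) ^ γ - (c - b) ^ γ) / γ := by
  have h1 : (∫ s in a..b, (c - s) ^ (γ - 1)) = ∫ x in c - b..c - a, x ^ (γ - 1) :=
    intervalIntegral.integral_comp_sub_left (fun x => x ^ (γ - 1)) c
  rw [h1, integral_rpow (Or.inl hγ)]
  norm_num

private lemma kernel2_int {γ : ℝ} (hγ1 : γ < 1) {s a b : ℝ} (hsa : s < a) (hab : a ≤ b) :
    ∫ y in a..b, (y - s) ^ (γ - 2) = ((b - s) ^ (γ - 1) - (a - s) ^ (γ - 1)) / (γ - 1) := by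
  have h1 : (∫ y in a..b, (y - s) ^ (γ - 2)) = ∫ x in a - s..b - s, x ^ (γ - 2) :=
    intervalIntegral.integral_comp_sub_right (fun x => x ^ (γ - 2)) s
  rw [h1, integral_rpow (Or.inr ⟨by intro h; rw [sub_eq_iff_eq_add] at h; linarith,
    Set.notMem_uIcc_of_lt (by linarith) (by linarith)⟩)]
  rw [show γ - 2 + 1 = γ - 1 by ring]

private lemma kernel2_intable {s a b p : ℝ} (hsa : s < a) (hab : a ≤ b) :
    IntervalIntegrable (fun y => (y - s) ^ p) volume a b := by
  apply ContinuousOn.intervalIntegrable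
  apply ContinuousOn.rpow_const (by fun_prop)
  intro x hx
  rw [Set.uIcc_of_le hab] at hx
  exact Or.inl (by have := hx.1; intro h; rw [sub_eq_zero] at h; linarith)

/-- There is `C = C(γ) > 0` such that for every step function `g` constant on each
`[t_{l-1}, t_l)` (`t_l = l/m`, `b = t_N`) and every `1 ≤ k ≤ N-1`:
`∫_{t_{k-1}}^{t_k} |D_{b-}^{1-γ} g_{b-}(s)| ds ≤ C m^{-γ}
  [ ∑_{l=k+1}^N |g(t_{k-1}) - g(t_{l-1})| |(l-1-k)^γ - 2(l-k)^γ + (l-k+1)^γ|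
    + |g(t_{k-1}) - g(t_{N-1})| ((N-k+1)^γ - (N-k)^γ) ]`. -/
theorem stmt_8 (γ : ℝ) (hγ0 : 0 < γ) (hγ1 : γ < 1) :
    ∃ C > (0 : ℝ), ∀ (m N : ℕ), 1 ≤ m → 2 ≤ N → ∀ g : ℝ → ℝ,
      (∀ l : ℕ, 1 ≤ l → l ≤ N →
        ∀ x ∈ Set.Ico (((l : ℝ) - 1) / m) ((l : ℝ) / m), g x = g (((l : ℝ) - 1) / m)) →
      ∀ k : ℕ, 1 ≤ k → k ≤ N - 1 →
      (∫ x in (((k : ℝ) - 1) / m)..((k : ℝ) / m),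
          |Dright γ ((N : ℝ) / m) (g (((N : ℝ) - 1) / m)) g x|)
        ≤ C * (m : ℝ) ^ (-γ) *
          ((∑ l ∈ Finset.Icc (k + 1) N,
              |g (((k : ℝ) - 1) / m) - g (((l : ℝ) - 1) / m)| *
                |((l : ℝ) - 1 - k) ^ γ - 2 * ((l : ℝ) - k) ^ γ + ((l : ℝ) - k + 1) ^ γ|)
            + |g (((k : ℝ) - 1) / m) - g (((N : ℝ) - 1) / m)| *
                (((N : ℝ) - k + 1) ^ γ - ((N : ℝ) - k) ^ γ)) := by
  have hΓ : 0 < Real.Gamma γ := Real.Gamma_pos_of_pos hγ0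
  refine ⟨1 / (Real.Gamma γ * γ), by positivity, ?_⟩
  intro m N hm hN g hg k hk1 hkN
  have hm0 : (0 : ℝ) < (m : ℝ) := by exact_mod_cast Nat.pos_of_ne_zero (by omega)
  have hkN' : k + 1 ≤ N := by omega
  have hγ' : -1 < γ - 1 := by linarith
  set A : ℝ := ((k : ℝ) - 1) / m with hA
  set B : ℝ := (k : ℝ) / m with hB
  have hAB : A < B := by
    rw [hA, hB, div_lt_div_iff_of_pos_right hm0]; linarith
  have hBN : B < (N : ℝ) / m := by
    rw [hB, div_lt_div_iff_of_pos_right hm0]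
    exact_mod_cast Nat.lt_of_lt_of_le (Nat.lt_succ_self k) hkN'
  have key : ∀ s ∈ Set.Ioo A B,
      Dright γ ((N : ℝ) / m) (g (((N : ℝ) - 1) / m)) g s
        = (1 / Real.Gamma γ) *
            ((g A - g (((N : ℝ) - 1) / m)) * ((N : ℝ) / m - s) ^ (γ - 1)
              + ∑ l ∈ Finset.Icc (k + 1) N, (g A - g (((l : ℝ) - 1) / m)) *
                  ((((l : ℝ) - 1) / m - s) ^ (γ - 1) - ((l : ℝ) / m - s) ^ (γ - 1))) := by
    intro s hs
    have hsA : A < s := hs.1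
    have hsB : s < B := hs.2
    have hgs : g s = g A := hg k hk1 (by omega) s ⟨hsA.le, hsB⟩
    have hne1 : γ - 1 ≠ 0 := sub_ne_zero.2 (ne_of_lt hγ1)
    have hsl : ∀ l : ℕ, k + 1 ≤ l → s < ((l : ℝ) - 1) / m := by
      intro l hl
      refine lt_of_lt_of_le hsB ?_
      rw [hB, div_le_div_iff_of_pos_right hm0]
      have : (k : ℝ) + 1 ≤ (l : ℝ) := by exact_mod_cast hl
      linarith
    have hll : ∀ l : ℕ, ((l : ℝ) - 1) / m ≤ (l : ℝ) / m := by
      intro l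
      rw [div_le_div_iff_of_pos_right hm0]; linarith
    -- per-interval value and integrability
    have piece : ∀ l : ℕ, k + 1 ≤ l → l ≤ N →
        (∫ y in (((l : ℝ) - 1) / m)..((l : ℝ) / m), (g s - g y) / (y - s) ^ (2 - γ))
          = (g s - g (((l : ℝ) - 1) / m)) *
              ((((l : ℝ) / m - s) ^ (γ - 1) - (((l : ℝ) - 1) / m - s) ^ (γ - 1)) / (γ - 1))
        ∧ IntervalIntegrable (fun y => (g s - g y) / (y - s) ^ (2 - γ)) volume
            (((l : ℝ) - 1) / m) ((l : ℝ) / m) := by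
      intro l hl1 hlN
      have h0 : s < ((l : ℝ) - 1) / m := hsl l hl1
      have h1 : ((l : ℝ) - 1) / m ≤ (l : ℝ) / m := hll l
      have heq : ∀ y ∈ Set.Ioo (((l : ℝ) - 1) / m) ((l : ℝ) / m),
          (g s - g (((l : ℝ) - 1) / m)) * (y - s) ^ (γ - 2)
            = (g s - g y) / (y - s) ^ (2 - γ) := by
        intro y hy
        have hgy : g y = g (((l : ℝ) - 1) / m) := hg l (by omega) hlN y ⟨hy.1.le, hy.2⟩
        have hys : 0 < y - s := by have := hy.1; linarith
        have hpow : (y - s) ^ (γ - 2) = ((y - s) ^ (2 - γ))⁻¹ := by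
          rw [← Real.rpow_neg hys.le]; congr 1; ring
        rw [hgy, hpow]
        exact (div_eq_mul_inv _ _).symm
      constructor
      · rw [← integral_congr_Ioo h1 heq, intervalIntegral.integral_const_mul,
          kernel2_int hγ1 h0 h1]
      · exact intervalIntegrable_congr_Ioo h1 heq
          ((kernel2_intable h0 h1).const_mul _)
    -- the "zero" initial piece
    have zeroeq : ∀ y ∈ Set.Ioo s B, (0 : ℝ) = (g s - g y) / (y - s) ^ (2 - γ) := by
      intro y hy
      have : g y = g A := hg k hk1 (by omega) y ⟨by linarith [hy.1, hsA], hy.2⟩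
      rw [this, hgs, sub_self, zero_div]
    -- the subdivision sequence
    set a : ℕ → ℝ := fun i => if i = 0 then s else (((k + i : ℕ) : ℝ) - 1) / m with ha
    have ha0 : a 0 = s := rfl
    have haS : ∀ i : ℕ, a (i + 1) = (((k + i + 1 : ℕ) : ℝ) - 1) / m := by
      intro i; simp only [ha]; rw [if_neg (Nat.succ_ne_zero i)]; norm_cast
    have ha1 : a 1 = B := by rw [haS 0]; push_cast; rw [hB]; ring_nf
    have hint : ∀ i < N - k + 1,
        IntervalIntegrable (fun y => (g s - g y) / (y - s) ^ (2 - γ)) volume (a i) (a (i + 1)) := by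
      intro i hi
      match i, hi with
      | 0, _ =>
        rw [ha0, ha1]
        exact intervalIntegrable_congr_Ioo hsB.le zeroeq intervalIntegrable_const
      | (i + 1), hi =>
        have e1 : a (i + 1) = (((k + 1 + i : ℕ) : ℝ) - 1) / m := by
          rw [haS i]; congr 2; push_cast; ring
        have e2 : a (i + 2) = ((k + 1 + i : ℕ) : ℝ) / m := by
          rw [haS (i + 1)]; push_cast; ring_nf
        rw [e1, e2]
        exact (piece (k + 1 + i) (by omega) (by omega)).2
    have hsplit := intervalIntegral.sum_integral_adjacent_intervals hint
    have han : a (N - k + 1) = (N : ℝ) / m := by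
      rw [haS (N - k)]
      have : k + (N - k) + 1 = N + 1 := by omega
      rw [this]; push_cast; ring_nf
    rw [ha0, han] at hsplit
    -- compute the full inner integral
    have inner : (∫ y in s..((N : ℝ) / m), (g s - g y) / (y - s) ^ (2 - γ))
        = ∑ l ∈ Finset.Icc (k + 1) N, (g s - g (((l : ℝ) - 1) / m)) *
            ((((l : ℝ) / m - s) ^ (γ - 1) - (((l : ℝ) - 1) / m - s) ^ (γ - 1)) / (γ - 1)) := by
      rw [← hsplit, Finset.sum_range_succ']
      have hz : (∫ y in (a 0)..(a 1), (g s - g y) / (y - s) ^ (2 - γ)) = 0 := by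
        rw [ha0, ha1, ← integral_congr_Ioo hsB.le zeroeq]
        simp
      rw [hz, add_zero]
      rw [← Finset.Ico_add_one_right_eq_Icc, Finset.sum_Ico_eq_sum_range]
      have : N + 1 - (k + 1) = N - k := by omega
      rw [this]
      refine Finset.sum_congr rfl ?_
      intro i hi
      have hi' : i < N - k := Finset.mem_range.1 hi
      have e1 : a (i + 1) = (((k + 1 + i : ℕ) : ℝ) - 1) / m := by
        rw [haS i]; congr 2; push_cast; ring
      have e2 : a (i + 1 + 1) = ((k + 1 + i : ℕ) : ℝ) / m := by
        rw [haS (i + 1)]; push_cast; ring_nf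
      rw [e1, e2]
      exact (piece (k + 1 + i) (by omega) (by omega)).1
    -- assemble
    have hTNs : 0 < (N : ℝ) / m - s := by
      have : B ≤ (N : ℝ) / m := by
        rw [hB, div_le_div_iff_of_pos_right hm0]
        exact_mod_cast Nat.le_of_succ_le hkN'
      linarith
    simp only [Dright]
    rw [inner, hgs]
    congr 1
    rw [Finset.mul_sum]
    congr 1
    · rw [show ((N : ℝ) / m - s) ^ (γ - 1) = (((N : ℝ) / m - s) ^ (1 - γ))⁻¹ by
        rw [← Real.rpow_neg hTNs.le]; congr 1; ring]
      exact div_eq_mul_inv _ _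
    · refine Finset.sum_congr rfl ?_
      intro l _
      field_simp [hne1]
      ring

  -- integrability of the kernels
  have hint1 : ∀ c : ℝ, IntervalIntegrable (fun s => (c - s) ^ (γ - 1)) volume A B :=
    fun c => kernel_intable hγ' A B c
  have sumint0 : ∀ c : ℕ → ℝ, IntervalIntegrable (fun s => ∑ l ∈ Finset.Icc (k + 1) N,
      c l * ((((l : ℝ) - 1) / m - s) ^ (γ - 1) - ((l : ℝ) / m - s) ^ (γ - 1))) volume A B := by
    intro c
    have h := IntervalIntegrable.sum (μ := volume) (a := A) (b := B) (Finset.Icc (k + 1) N)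
      (f := fun l s => c l * ((((l : ℝ) - 1) / m - s) ^ (γ - 1) - ((l : ℝ) / m - s) ^ (γ - 1)))
      (fun l _ => ((hint1 _).sub (hint1 _)).const_mul _)
    rwa [Finset.sum_fn] at h
  have sumint2 : IntervalIntegrable (fun s => ∑ l ∈ Finset.Icc (k + 1) N,
      |g A - g (((l : ℝ) - 1) / m)| *
        ((((l : ℝ) - 1) / m - s) ^ (γ - 1) - ((l : ℝ) / m - s) ^ (γ - 1))) volume A B :=
    sumint0 (fun l => |g A - g (((l : ℝ) - 1) / m)|)
  have φint : IntervalIntegrable (fun s => (1 / Real.Gamma γ) *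
      ((g A - g (((N : ℝ) - 1) / m)) * ((N : ℝ) / m - s) ^ (γ - 1)
        + ∑ l ∈ Finset.Icc (k + 1) N, (g A - g (((l : ℝ) - 1) / m)) *
            ((((l : ℝ) - 1) / m - s) ^ (γ - 1) - ((l : ℝ) / m - s) ^ (γ - 1)))) volume A B := by
    exact (((hint1 _).const_mul _).add (sumint0 (fun l => g A - g (((l : ℝ) - 1) / m)))).const_mul _
  have ψint : IntervalIntegrable (fun s => (1 / Real.Gamma γ) *
      (|g A - g (((N : ℝ) - 1) / m)| * ((N : ℝ) / m - s) ^ (γ - 1)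
        + ∑ l ∈ Finset.Icc (k + 1) N, |g A - g (((l : ℝ) - 1) / m)| *
            ((((l : ℝ) - 1) / m - s) ^ (γ - 1) - ((l : ℝ) / m - s) ^ (γ - 1)))) volume A B :=
    (((hint1 _).const_mul _).add sumint2).const_mul _
  -- difference rewrites
  have hkNr : (k : ℝ) + 1 ≤ (N : ℝ) := by exact_mod_cast hkN'
  have d1 : (N : ℝ) / m - A = ((N : ℝ) - k + 1) / m := by
    rw [hA, ← sub_div]; congr 1; ring
  have d2 : (N : ℝ) / m - B = ((N : ℝ) - k) / m := by
    rw [hB, ← sub_div]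
  have powm : ∀ x : ℝ, 0 ≤ x → (x / m) ^ γ = x ^ γ * (m : ℝ) ^ (-γ) := by
    intro x hx
    rw [Real.div_rpow hx hm0.le, Real.rpow_neg hm0.le, div_eq_mul_inv]
  have expand : ∀ l ∈ Finset.Icc (k + 1) N,
      |g A - g (((l : ℝ) - 1) / m)| *
          ((((((l : ℝ) - 1) / m - A) ^ γ - (((l : ℝ) - 1) / m - B) ^ γ) / γ)
            - ((((l : ℝ) / m - A) ^ γ - ((l : ℝ) / m - B) ^ γ) / γ))
        = (m : ℝ) ^ (-γ) * (1 / γ) * (|g A - g (((l : ℝ) - 1) / m)| *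
            (2 * ((l : ℝ) - k) ^ γ - ((l : ℝ) - 1 - k) ^ γ - ((l : ℝ) - k + 1) ^ γ)) := by
    intro l hl
    have hl1 : (k : ℝ) + 1 ≤ (l : ℝ) := by exact_mod_cast (Finset.mem_Icc.1 hl).1
    have e1 : ((l : ℝ) - 1) / m - A = ((l : ℝ) - k) / m := by
      rw [hA, ← sub_div]; congr 1; ring
    have e2 : ((l : ℝ) - 1) / m - B = ((l : ℝ) - 1 - k) / m := by
      rw [hB, ← sub_div]
    have e3 : (l : ℝ) / m - A = ((l : ℝ) - k + 1) / m := by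
      rw [hA, ← sub_div]; congr 1; ring
    have e4 : (l : ℝ) / m - B = ((l : ℝ) - k) / m := by
      rw [hB, ← sub_div]
    rw [e1, e2, e3, e4, powm _ (by linarith), powm _ (by linarith), powm _ (by linarith)]
    ring
  -- main calc
  calc (∫ x in A..B, |Dright γ ((N : ℝ) / m) (g (((N : ℝ) - 1) / m)) g x|)
      = ∫ x in A..B, |(1 / Real.Gamma γ) *
          ((g A - g (((N : ℝ) - 1) / m)) * ((N : ℝ) / m - x) ^ (γ - 1)
            + ∑ l ∈ Finset.Icc (k + 1) N, (g A - g (((l : ℝ) - 1) / m)) *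
                ((((l : ℝ) - 1) / m - x) ^ (γ - 1) - ((l : ℝ) / m - x) ^ (γ - 1)))| :=
        integral_congr_Ioo hAB.le (fun s hs => by rw [key s hs])
    _ ≤ ∫ x in A..B, (1 / Real.Gamma γ) *
          (|g A - g (((N : ℝ) - 1) / m)| * ((N : ℝ) / m - x) ^ (γ - 1)
            + ∑ l ∈ Finset.Icc (k + 1) N, |g A - g (((l : ℝ) - 1) / m)| *
                ((((l : ℝ) - 1) / m - x) ^ (γ - 1) - ((l : ℝ) / m - x) ^ (γ - 1))) := by
        refine integral_mono_Ioo hAB.le φint.abs ψint ?_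
        intro s hs
        have hNs : (0 : ℝ) ≤ (N : ℝ) / m - s := by
          have : s < (N : ℝ) / m := lt_trans hs.2 hBN
          linarith
        have hK : (0 : ℝ) ≤ ((N : ℝ) / m - s) ^ (γ - 1) := Real.rpow_nonneg hNs _
        have hsub : ∀ l ∈ Finset.Icc (k + 1) N,
            (0 : ℝ) ≤ (((l : ℝ) - 1) / m - s) ^ (γ - 1) - ((l : ℝ) / m - s) ^ (γ - 1) := by
          intro l hl
          have hl1 : (k : ℝ) + 1 ≤ (l : ℝ) := by exact_mod_cast (Finset.mem_Icc.1 hl).1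
          have h0 : 0 < ((l : ℝ) - 1) / m - s := by
            have : B ≤ ((l : ℝ) - 1) / m := by
              rw [hB, div_le_div_iff_of_pos_right hm0]; linarith
            have := hs.2; linarith
          have h1 : ((l : ℝ) - 1) / m - s ≤ (l : ℝ) / m - s := by
            have : ((l : ℝ) - 1) / m ≤ (l : ℝ) / m := by
              rw [div_le_div_iff_of_pos_right hm0]; linarith
            linarith
          exact sub_nonneg.2 (Real.rpow_le_rpow_of_nonpos h0 h1 (by linarith))
        rw [abs_mul, abs_of_nonneg (one_div_nonneg.2 hΓ.le)]
        refine mul_le_mul_of_nonneg_left ?_ (one_div_nonneg.2 hΓ.le)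
        calc |(g A - g (((N : ℝ) - 1) / m)) * ((N : ℝ) / m - s) ^ (γ - 1)
              + ∑ l ∈ Finset.Icc (k + 1) N, (g A - g (((l : ℝ) - 1) / m)) *
                  ((((l : ℝ) - 1) / m - s) ^ (γ - 1) - ((l : ℝ) / m - s) ^ (γ - 1))|
            ≤ |(g A - g (((N : ℝ) - 1) / m)) * ((N : ℝ) / m - s) ^ (γ - 1)|
              + |∑ l ∈ Finset.Icc (k + 1) N, (g A - g (((l : ℝ) - 1) / m)) *
                  ((((l : ℝ) - 1) / m - s) ^ (γ - 1) - ((l : ℝ) / m - s) ^ (γ - 1))| :=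
            abs_add_le _ _
          _ ≤ |g A - g (((N : ℝ) - 1) / m)| * ((N : ℝ) / m - s) ^ (γ - 1)
              + ∑ l ∈ Finset.Icc (k + 1) N, |g A - g (((l : ℝ) - 1) / m)| *
                  ((((l : ℝ) - 1) / m - s) ^ (γ - 1) - ((l : ℝ) / m - s) ^ (γ - 1)) := by
            rw [abs_mul, abs_of_nonneg hK]
            refine add_le_add_right ((Finset.abs_sum_le_sum_abs _ _).trans
              (Finset.sum_le_sum ?_)) _
            intro l hl
            rw [abs_mul, abs_of_nonneg (hsub l hl)]
    _ = (1 / Real.Gamma γ) *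
          (|g A - g (((N : ℝ) - 1) / m)| * ((((N : ℝ) / m - A) ^ γ - ((N : ℝ) / m - B) ^ γ) / γ)
            + ∑ l ∈ Finset.Icc (k + 1) N, |g A - g (((l : ℝ) - 1) / m)| *
                (((((((l : ℝ) - 1) / m - A) ^ γ - (((l : ℝ) - 1) / m - B) ^ γ) / γ))
                  - ((((l : ℝ) / m - A) ^ γ - ((l : ℝ) / m - B) ^ γ) / γ))) := by
        rw [intervalIntegral.integral_const_mul]
        congr 1
        rw [intervalIntegral.integral_add ((hint1 _).const_mul _) sumint2]
        congr 1
        · rw [intervalIntegral.integral_const_mul, kernel_int hγ' A B _]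
        · rw [intervalIntegral.integral_finset_sum (μ := volume) (a := A) (b := B)
            (f := fun (l : ℕ) (s : ℝ) => |g A - g (((l : ℝ) - 1) / m)| *
              ((((l : ℝ) - 1) / m - s) ^ (γ - 1) - ((l : ℝ) / m - s) ^ (γ - 1)))
            (fun l _ => ((hint1 _).sub (hint1 _)).const_mul _)]
          refine Finset.sum_congr rfl ?_
          intro l hl
          rw [intervalIntegral.integral_const_mul,
            intervalIntegral.integral_sub (hint1 _) (hint1 _),
            kernel_int hγ' A B _, kernel_int hγ' A B _]
    _ = 1 / (Real.Gamma γ * γ) * (m : ℝ) ^ (-γ) *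
          (|g A - g (((N : ℝ) - 1) / m)| * (((N : ℝ) - k + 1) ^ γ - ((N : ℝ) - k) ^ γ)
            + ∑ l ∈ Finset.Icc (k + 1) N, |g A - g (((l : ℝ) - 1) / m)| *
                (2 * ((l : ℝ) - k) ^ γ - ((l : ℝ) - 1 - k) ^ γ - ((l : ℝ) - k + 1) ^ γ)) := by
        rw [Finset.sum_congr rfl expand, d1, d2, powm _ (by linarith), powm _ (by linarith),
          ← Finset.mul_sum]
        ring
    _ ≤ 1 / (Real.Gamma γ * γ) * (m : ℝ) ^ (-γ) *
          ((∑ l ∈ Finset.Icc (k + 1) N,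
              |g A - g (((l : ℝ) - 1) / m)| *
                |((l : ℝ) - 1 - k) ^ γ - 2 * ((l : ℝ) - k) ^ γ + ((l : ℝ) - k + 1) ^ γ|)
            + |g A - g (((N : ℝ) - 1) / m)| *
                (((N : ℝ) - k + 1) ^ γ - ((N : ℝ) - k) ^ γ)) := by
        refine mul_le_mul_of_nonneg_left ?_
          (mul_nonneg (by positivity) (Real.rpow_nonneg hm0.le _))
        have hS : (∑ l ∈ Finset.Icc (k + 1) N, |g A - g (((l : ℝ) - 1) / m)| *
              (2 * ((l : ℝ) - k) ^ γ - ((l : ℝ) - 1 - k) ^ γ - ((l : ℝ) - k + 1) ^ γ))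
            ≤ ∑ l ∈ Finset.Icc (k + 1) N, |g A - g (((l : ℝ) - 1) / m)| *
                |((l : ℝ) - 1 - k) ^ γ - 2 * ((l : ℝ) - k) ^ γ + ((l : ℝ) - k + 1) ^ γ| := by
          refine Finset.sum_le_sum ?_
          intro l _
          refine mul_le_mul_of_nonneg_left ?_ (abs_nonneg _)
          have := neg_le_abs (((l : ℝ) - 1 - k) ^ γ - 2 * ((l : ℝ) - k) ^ γ
            + ((l : ℝ) - k + 1) ^ γ)
          linarith
        linarith
end

section
/- Let T > 0 and α ∈ (1/2, 1], and fix γ with 1/2 < γ < α. Let (Ω, F, P) be a probability space and, for each integer m ≥ 1, let ξ_{1,m}, …, ξ_{⌊mT⌋,m} be integrable random variables satisfying condition (H2): there is a constant C₀ > 0 (independent of m) with E[|Σ_{i=j+1}^{k} ξ_{i,m}|^4] ≤ C₀ ((k−j)/m)² for all 0 ≤ j < k ≤ ⌊mT⌋. Let f : Ω × [0,T] → ℝ be such that f(·, t) is measurable for each t and f(ω, ·) is continuous for each ω, and let ‖f(ω,·)‖_α = sup_{u≠v} |f(ω,u) − f(ω,v)|/|u−v|^α denote the (possibly infinite) α-Hölder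 seminorm of the path. Define R_{n,m}(t) = Σ_{j=1}^{⌊nt⌋} Σ_{i ∈ I_n(j)} (f(·, t_i) − f(·, u_{j−1})) ξ_{i,m}. Then there exists a constant C > 0, depending only on α, γ, T and C₀, such that for all K > 0 and all positive integers n ≤ m: E[ sup_{t ∈ [0,T]} |R_{n,m}(t)| · 1_{{‖f(·,·)‖_α ≤ K}} ] ≤ C K n^{1/2 − α}. -/
open MeasureTheory Finset


lemma aux_majorize {β x y u v : ℝ} (hβ : 1 ≤ β) (hy : 0 ≤ y) (hv : 0 ≤ v)
    (hsum : x + y = u + v) (hvy : v ≤ y) (hyx : y ≤ x) (hxu : x ≤ u) :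
    x ^ β + y ^ β ≤ u ^ β + v ^ β := by
  have hx : 0 ≤ x := hy.trans hyx
  have hu : 0 ≤ u := hx.trans hxu
  rcases eq_or_lt_of_le (hvy.trans (hyx.trans hxu)) with h | h
  · -- v = u, hence all equal
    have hxe : x = u := le_antisymm hxu (h ▸ (hvy.trans hyx))
    have hye : y = v := by linarith
    rw [hxe, hye]
  · set l : ℝ := (x - v) / (u - v) with hl
    have huv : 0 < u - v := by linarith
    have hl0 : 0 ≤ l := div_nonneg (by linarith) huv.le
    have hl1 : l ≤ 1 := (div_le_one huv).2 (by linarith)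
    have hxly : x = l * u + (1 - l) * v := by
      rw [hl]; field_simp [huv.ne']; ring
    have hyly : y = (1 - l) * u + l * v := by
      have : y = u + v - x := by linarith
      rw [this, hxly]; ring
    have hcx := (convexOn_rpow hβ).2 (Set.mem_Ici.2 hu) (Set.mem_Ici.2 hv) hl0
      (by linarith : (0:ℝ) ≤ 1 - l) (by ring : l + (1 - l) = 1)
    have hcy := (convexOn_rpow hβ).2 (Set.mem_Ici.2 hu) (Set.mem_Ici.2 hv)
      (by linarith : (0:ℝ) ≤ 1 - l) hl0 (by ring : 1 - l + l = 1)
    simp only [smul_eq_mul] at hcx hcy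
    calc x ^ β + y ^ β = (l * u + (1-l) * v) ^ β + ((1-l) * u + l * v) ^ β := by
          rw [← hxly, ← hyly]
      _ ≤ (l * u ^ β + (1-l) * v ^ β) + ((1-l) * u ^ β + l * v ^ β) := by
          refine add_le_add ?_ ?_
          · simpa using hcx
          · simpa [add_comm] using hcy
      _ = u ^ β + v ^ β := by ring

lemma moment_bound {Ω : Type} [MeasurableSpace Ω] (μ : Measure Ω) [IsProbabilityMeasure μ]
    (S : Ω → ℝ) (hSint : Integrable S μ) (V : ℝ) (hV : 0 < V)
    (h4 : (∫⁻ ω, ENNReal.ofReal (|S ω| ^ 4) ∂μ) ≤ ENNReal.ofReal V) :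
    ∫ ω, |S ω| ∂μ ≤ 2 * V ^ ((1:ℝ)/4) := by
  set ε : ℝ := V ^ ((1:ℝ)/4) with hε
  have hε0 : 0 < ε := Real.rpow_pos_of_pos hV _
  have hASM : AEStronglyMeasurable (fun ω => |S ω| ^ 4) μ :=
    (continuous_abs.pow 4).comp_aestronglyMeasurable hSint.1
  have hX4int : Integrable (fun ω => |S ω| ^ 4) μ := by
    refine ⟨hASM, ?_⟩
    rw [hasFiniteIntegral_iff_ofReal (ae_of_all _ fun ω => by positivity)]
    exact lt_of_le_of_lt h4 ENNReal.ofReal_lt_top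
  have hX4 : ∫ ω, |S ω| ^ 4 ∂μ ≤ V := by
    rw [integral_eq_lintegral_of_nonneg_ae (ae_of_all _ fun ω => by positivity) hASM]
    exact ENNReal.toReal_le_of_le_ofReal hV.le h4
  have hpt : ∀ ω, |S ω| ≤ ε + |S ω| ^ 4 / ε ^ 3 := by
    intro ω
    rcases le_or_gt (|S ω|) ε with h | h
    · have : (0:ℝ) ≤ |S ω| ^ 4 / ε ^ 3 := by positivity
      linarith
    · have h3 : ε ^ 3 ≤ |S ω| ^ 3 := pow_le_pow_left₀ hε0.le h.le 3
      have h5 : |S ω| * ε ^ 3 ≤ |S ω| ^ 4 := by nlinarith [abs_nonneg (S ω)]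
      have : |S ω| ≤ |S ω| ^ 4 / ε ^ 3 := (le_div_iff₀ (by positivity)).2 h5
      linarith
  have hεV : ε ^ 4 = V := by
    rw [hε, ← Real.rpow_natCast (V ^ ((1:ℝ)/4)) 4, ← Real.rpow_mul hV.le]
    norm_num
  calc ∫ ω, |S ω| ∂μ ≤ ∫ ω, (ε + |S ω| ^ 4 / ε ^ 3) ∂μ :=
        integral_mono hSint.abs ((integrable_const ε).add (hX4int.div_const _)) hpt
    _ = ε + (∫ ω, |S ω| ^ 4 ∂μ) / ε ^ 3 := by
        rw [integral_add (integrable_const _) (hX4int.div_const _), integral_const,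
          probReal_univ, smul_eq_mul, one_mul, integral_div]
    _ ≤ ε + V / ε ^ 3 := by gcongr
    _ = 2 * V ^ ((1:ℝ)/4) := by
        have : V / ε ^ 3 = ε := by
          field_simp
          nlinarith [hεV]
        rw [this]; ring

lemma integrable_helper {Ω : Type} [MeasurableSpace Ω] (μ : Measure Ω)
    (A : Set Ω) (hA : MeasurableSet A) (F : Finset ℕ) (c ξi : ℕ → Ω → ℝ)
    (hc : ∀ i ∈ F, AEStronglyMeasurable (c i) μ) (hξ : ∀ i ∈ F, Integrable (ξi i) μ)
    (bd : ℕ → ℝ) (hbd0 : ∀ i ∈ F, 0 ≤ bd i)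
    (hbd : ∀ i ∈ F, ∀ ω ∈ A, |c i ω| ≤ bd i) :
    Integrable (fun ω => |∑ i ∈ F, c i ω * ξi i ω| *
      A.indicator (fun _ => (1:ℝ)) ω) μ := by
  have hind : Measurable (A.indicator (fun _ => (1:ℝ))) :=
    measurable_const.indicator hA
  have hsumASM : AEStronglyMeasurable (fun ω => ∑ i ∈ F, c i ω * ξi i ω) μ :=
    Finset.aestronglyMeasurable_fun_sum F (fun i hi => (hc i hi).mul (hξ i hi).1)
  have hfASM : AEStronglyMeasurable
      (fun ω => |∑ i ∈ F, c i ω * ξi i ω| * A.indicator (fun _ => (1:ℝ)) ω) μ := by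
    have := hsumASM.norm.mul hind.aestronglyMeasurable
    simpa [Real.norm_eq_abs, Pi.mul_def] using this
  refine Integrable.mono' (g := fun ω => ∑ i ∈ F, bd i * |ξi i ω|)
    (integrable_finset_sum _ (fun i hi => ((hξ i hi).abs.const_mul _))) hfASM ?_
  refine ae_of_all _ fun ω => ?_
  have hnn : (0:ℝ) ≤ ∑ i ∈ F, bd i * |ξi i ω| :=
    Finset.sum_nonneg fun i hi => mul_nonneg (hbd0 i hi) (abs_nonneg _)
  rw [Real.norm_eq_abs, abs_mul, abs_abs]
  by_cases hω : ω ∈ A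
  · rw [Set.indicator_of_mem hω]
    simp only [abs_one, mul_one]
    calc |∑ i ∈ F, c i ω * ξi i ω| ≤ ∑ i ∈ F, |c i ω * ξi i ω| :=
          Finset.abs_sum_le_sum_abs _ _
      _ ≤ ∑ i ∈ F, bd i * |ξi i ω| := Finset.sum_le_sum fun i hi => by
          rw [abs_mul]
          exact mul_le_mul_of_nonneg_right (hbd i hi ω hω) (abs_nonneg _)
  · rw [Set.indicator_of_notMem hω]
    simpa using hnn

lemma dyadic_bound {Ω : Type} [MeasurableSpace Ω] (μ : Measure Ω) [IsProbabilityMeasure μ]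
    (A : Set Ω) (hA : MeasurableSet A)
    (ξi : ℕ → Ω → ℝ) (hξ : ∀ i, Integrable (ξi i) μ)
    (m M : ℕ) (hm : 0 < m)
    (C₁ : ℝ) (hC₁ : 0 ≤ C₁)
    (hS : ∀ p q : ℕ, p < q → q ≤ M →
      ∫ ω, |∑ i ∈ Finset.Ioc p q, ξi i ω| ∂μ ≤ C₁ * (((q:ℝ) - p) / m) ^ ((1:ℝ)/2))
    (α K D : ℝ) (hα0 : 0 < α) (hβ1 : 1 ≤ α + 1/2) (hK : 0 ≤ K) (hD : 0 < D)
    (hDrec : ((2/3:ℝ)) ^ (α + 1/2) * D + ((1/3:ℝ)) ^ (α + 1/2) * D + 1 ≤ D)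
    (c : ℕ → Ω → ℝ) (hc : ∀ i, AEStronglyMeasurable (c i) μ) :
    ∀ L p : ℕ, p + L ≤ M →
    (∀ i ∈ Finset.Ioc p (p + L), ∀ i' ∈ Finset.Ioc p (p + L), ∀ ω ∈ A,
      |c i ω - c i' ω| ≤ K * ((|(i:ℝ) - (i':ℝ)|) / m) ^ α) →
    ∫ ω, |∑ i ∈ Finset.Ioc p (p + L), (c i ω - c (p+1) ω) * ξi i ω| *
        A.indicator (fun _ => (1:ℝ)) ω ∂μ
      ≤ D * (K * C₁ * (((L:ℝ)) / m) ^ (α + 1/2)) := by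
  intro L
  induction L using Nat.strong_induction_on with
  | _ L IH =>
  intro p hpM hHol
  have hrpos : (0:ℝ) ≤ D * (K * C₁ * (((L:ℝ)) / m) / 1) := by positivity
  by_cases hL0 : L = 0
  · subst hL0
    simp only [Nat.add_zero, Finset.Ioc_self, Finset.sum_empty, abs_zero, zero_mul,
      integral_zero]
    positivity
  by_cases hL1 : L = 1
  · subst hL1
    simp only [Nat.Ioc_succ_singleton, Finset.sum_singleton, sub_self, zero_mul,
      abs_zero, integral_zero]
    positivity
  have hL2 : 2 ≤ L := by omega
  set l1 := (L + 1) / 2 with hl1def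
  set l2 := L - l1 with hl2def
  have hl1 : 1 ≤ l1 := by omega
  have hl1L : l1 < L := by omega
  have hl2 : 1 ≤ l2 := by omega
  have hl2L : l2 < L := by omega
  have hl2l1 : l2 ≤ l1 := by omega
  have hsum12 : l1 + l2 = L := by omega
  have h3l1 : 3 * l1 ≤ 2 * L := by omega
  have h3l2 : L ≤ 3 * l2 := by omega
  set h := p + l1 with hhdef
  have key : ∀ ω, ∑ i ∈ Finset.Ioc p (p + L), (c i ω - c (p+1) ω) * ξi i ω
      = (∑ i ∈ Finset.Ioc p h, (c i ω - c (p+1) ω) * ξi i ω)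
        + (∑ i ∈ Finset.Ioc h (p + L), (c i ω - c (h+1) ω) * ξi i ω)
        + (c (h+1) ω - c (p+1) ω) * ∑ i ∈ Finset.Ioc h (p + L), ξi i ω := by
    intro ω
    rw [← Finset.sum_Ioc_consecutive (fun i => (c i ω - c (p+1) ω) * ξi i ω)
      (by omega : p ≤ h) (by omega : h ≤ p + L)]
    rw [Finset.mul_sum, add_assoc, ← Finset.sum_add_distrib]
    exact congrArg _ (Finset.sum_congr rfl fun i _ => by ring)
  -- abbreviations
  have hind_nonneg : ∀ ω, 0 ≤ A.indicator (fun _ => (1:ℝ)) ω :=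
    fun ω => Set.indicator_nonneg (fun _ _ => zero_le_one) ω
  have hmem_p1 : p + 1 ∈ Finset.Ioc p (p + L) := by simp [Finset.mem_Ioc]; omega
  have hmem_h1 : h + 1 ∈ Finset.Ioc p (p + L) := by simp [Finset.mem_Ioc]; omega
  have hmpos : (0:ℝ) < m := by exact_mod_cast hm
  have hLpos : (0:ℝ) < (L:ℝ) := by exact_mod_cast (by omega : 0 < L)
  have hmono : ∀ x y : ℝ, 0 ≤ x → x ≤ y → (x/m) ^ α ≤ (y/m) ^ α := by
    intro x y hx hxy
    exact Real.rpow_le_rpow (by positivity) (by gcongr) hα0.le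
  -- coefficient bound for the left half and for the cross term
  have hcoef1 : ∀ i ∈ Finset.Ioc p h, ∀ ω ∈ A,
      |c i ω - c (p+1) ω| ≤ K * (((l1:ℝ))/m) ^ α := by
    intro i hi ω hω
    have hi' := Finset.mem_Ioc.1 hi
    have h1 : ((p:ℝ) + 1) ≤ (i:ℝ) := by exact_mod_cast hi'.1
    have h2 : (i:ℝ) ≤ (p:ℝ) + (l1:ℝ) := by
      have h2' : i ≤ p + l1 := by have := hi'.2; omega
      exact_mod_cast h2'
    have hl1R : (1:ℝ) ≤ (l1:ℝ) := by exact_mod_cast hl1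
    have habs : |(i:ℝ) - ((p+1:ℕ):ℝ)| ≤ (l1:ℝ) := by
      rw [abs_le]; push_cast
      constructor
      · linarith
      · linarith
    calc |c i ω - c (p+1) ω| ≤ K * ((|(i:ℝ) - ((p+1:ℕ):ℝ)|)/m) ^ α :=
          hHol i (Finset.Ioc_subset_Ioc_right (by omega) hi) (p+1) hmem_p1 ω hω
      _ ≤ K * (((l1:ℝ))/m) ^ α :=
          mul_le_mul_of_nonneg_left (hmono _ _ (abs_nonneg _) habs) hK
  have hcoef3 : ∀ ω ∈ A, |c (h+1) ω - c (p+1) ω| ≤ K * (((l1:ℝ))/m) ^ α := by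
    intro ω hω
    have habs : |((h+1:ℕ):ℝ) - ((p+1:ℕ):ℝ)| = (l1:ℝ) := by
      have e : ((h+1:ℕ):ℝ) - ((p+1:ℕ):ℝ) = (l1:ℝ) := by
        rw [hhdef]; push_cast; ring
      rw [e, abs_of_nonneg (by positivity)]
    calc |c (h+1) ω - c (p+1) ω| ≤ K * ((|((h+1:ℕ):ℝ) - ((p+1:ℕ):ℝ)|)/m) ^ α :=
          hHol (h+1) hmem_h1 (p+1) hmem_p1 ω hω
      _ = K * (((l1:ℝ))/m) ^ α := by rw [habs]
  have hcoef2 : ∀ i ∈ Finset.Ioc h (p + L), ∀ ω ∈ A,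
      |c i ω - c (h+1) ω| ≤ K * (((l2:ℝ))/m) ^ α := by
    intro i hi ω hω
    have hi' := Finset.mem_Ioc.1 hi
    have habs : |(i:ℝ) - ((h+1:ℕ):ℝ)| ≤ (l2:ℝ) := by
      have e1 : (i:ℝ) ≤ (p:ℝ) + (L:ℝ) := by exact_mod_cast hi'.2
      have e2 : (p:ℝ) + (l1:ℝ) + 1 ≤ (i:ℝ) := by
        have : p + l1 + 1 ≤ i := by have := hi'.1; omega
        exact_mod_cast this
      have e3 : (l1:ℝ) + (l2:ℝ) = (L:ℝ) := by exact_mod_cast hsum12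
      have e4 : (1:ℝ) ≤ (l2:ℝ) := by exact_mod_cast hl2
      have e5 : ((h+1:ℕ):ℝ) = (p:ℝ) + (l1:ℝ) + 1 := by rw [hhdef]; push_cast; ring
      rw [abs_le, e5]
      constructor
      · linarith
      · linarith
    calc |c i ω - c (h+1) ω| ≤ K * ((|(i:ℝ) - ((h+1:ℕ):ℝ)|)/m) ^ α :=
          hHol i (Finset.Ioc_subset_Ioc_left (by omega) hi) (h+1) hmem_h1 ω hω
      _ ≤ K * (((l2:ℝ))/m) ^ α :=
          mul_le_mul_of_nonneg_left (hmono _ _ (abs_nonneg _) habs) hK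
  -- integrability of the three pieces
  have I1 : Integrable (fun ω => |∑ i ∈ Finset.Ioc p h, (c i ω - c (p+1) ω) * ξi i ω| *
      A.indicator (fun _ => (1:ℝ)) ω) μ :=
    integrable_helper μ A hA _ _ _ (fun i _ => (hc i).sub (hc (p+1))) (fun i _ => hξ i)
      (fun _ => K * (((l1:ℝ))/m) ^ α) (fun i _ => by positivity) hcoef1
  have I2 : Integrable (fun ω => |∑ i ∈ Finset.Ioc h (p + L), (c i ω - c (h+1) ω) * ξi i ω| *
      A.indicator (fun _ => (1:ℝ)) ω) μ :=
    integrable_helper μ A hA _ _ _ (fun i _ => (hc i).sub (hc (h+1))) (fun i _ => hξ i)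
      (fun _ => K * (((l2:ℝ))/m) ^ α) (fun i _ => by positivity) hcoef2
  have I3 : Integrable (fun ω => |(c (h+1) ω - c (p+1) ω) * ∑ i ∈ Finset.Ioc h (p + L), ξi i ω| *
      A.indicator (fun _ => (1:ℝ)) ω) μ := by
    have := integrable_helper μ A hA (Finset.Ioc h (p + L))
      (fun _ ω => c (h+1) ω - c (p+1) ω) ξi
      (fun i _ => (hc (h+1)).sub (hc (p+1))) (fun i _ => hξ i)
      (fun _ => K * (((l1:ℝ))/m) ^ α) (fun i _ => by positivity)
      (fun i _ ω hω => hcoef3 ω hω)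
    simpa [← Finset.mul_sum] using this
  have hintS : Integrable (fun ω => ∑ i ∈ Finset.Ioc h (p + L), ξi i ω) μ :=
    integrable_finset_sum _ fun i _ => hξ i
  -- step 1 : split the integral
  have hePL : h + l2 = p + L := by omega
  have hpt1 : ∀ ω, |∑ i ∈ Finset.Ioc p (p + L), (c i ω - c (p+1) ω) * ξi i ω| *
        A.indicator (fun _ => (1:ℝ)) ω
      ≤ |∑ i ∈ Finset.Ioc p h, (c i ω - c (p+1) ω) * ξi i ω| *
          A.indicator (fun _ => (1:ℝ)) ω
        + |∑ i ∈ Finset.Ioc h (p + L), (c i ω - c (h+1) ω) * ξi i ω| *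
          A.indicator (fun _ => (1:ℝ)) ω
        + |(c (h+1) ω - c (p+1) ω) * ∑ i ∈ Finset.Ioc h (p + L), ξi i ω| *
          A.indicator (fun _ => (1:ℝ)) ω := by
    intro ω
    rw [key ω]
    have h1 := abs_add_three
      (∑ i ∈ Finset.Ioc p h, (c i ω - c (p+1) ω) * ξi i ω)
      (∑ i ∈ Finset.Ioc h (p + L), (c i ω - c (h+1) ω) * ξi i ω)
      ((c (h+1) ω - c (p+1) ω) * ∑ i ∈ Finset.Ioc h (p + L), ξi i ω)
    calc _ ≤ (|∑ i ∈ Finset.Ioc p h, (c i ω - c (p+1) ω) * ξi i ω|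
          + |∑ i ∈ Finset.Ioc h (p + L), (c i ω - c (h+1) ω) * ξi i ω|
          + |(c (h+1) ω - c (p+1) ω) * ∑ i ∈ Finset.Ioc h (p + L), ξi i ω|) *
            A.indicator (fun _ => (1:ℝ)) ω :=
        mul_le_mul_of_nonneg_right h1 (hind_nonneg ω)
      _ = _ := by ring
  have step1 : ∫ ω, |∑ i ∈ Finset.Ioc p (p + L), (c i ω - c (p+1) ω) * ξi i ω| *
        A.indicator (fun _ => (1:ℝ)) ω ∂μ
      ≤ (∫ ω, |∑ i ∈ Finset.Ioc p h, (c i ω - c (p+1) ω) * ξi i ω| *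
          A.indicator (fun _ => (1:ℝ)) ω ∂μ)
        + (∫ ω, |∑ i ∈ Finset.Ioc h (p + L), (c i ω - c (h+1) ω) * ξi i ω| *
          A.indicator (fun _ => (1:ℝ)) ω ∂μ)
        + (∫ ω, |(c (h+1) ω - c (p+1) ω) * ∑ i ∈ Finset.Ioc h (p + L), ξi i ω| *
          A.indicator (fun _ => (1:ℝ)) ω ∂μ) := by
    have hadd : (∫ ω, (|∑ i ∈ Finset.Ioc p h, (c i ω - c (p+1) ω) * ξi i ω| *
          A.indicator (fun _ => (1:ℝ)) ω
        + |∑ i ∈ Finset.Ioc h (p + L), (c i ω - c (h+1) ω) * ξi i ω| *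
          A.indicator (fun _ => (1:ℝ)) ω
        + |(c (h+1) ω - c (p+1) ω) * ∑ i ∈ Finset.Ioc h (p + L), ξi i ω| *
          A.indicator (fun _ => (1:ℝ)) ω) ∂μ)
        = (∫ ω, |∑ i ∈ Finset.Ioc p h, (c i ω - c (p+1) ω) * ξi i ω| *
            A.indicator (fun _ => (1:ℝ)) ω ∂μ)
          + (∫ ω, |∑ i ∈ Finset.Ioc h (p + L), (c i ω - c (h+1) ω) * ξi i ω| *
            A.indicator (fun _ => (1:ℝ)) ω ∂μ)
          + (∫ ω, |(c (h+1) ω - c (p+1) ω) * ∑ i ∈ Finset.Ioc h (p + L), ξi i ω| *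
            A.indicator (fun _ => (1:ℝ)) ω ∂μ) := by
      calc (∫ ω, (|∑ i ∈ Finset.Ioc p h, (c i ω - c (p+1) ω) * ξi i ω| *
              A.indicator (fun _ => (1:ℝ)) ω
            + |∑ i ∈ Finset.Ioc h (p + L), (c i ω - c (h+1) ω) * ξi i ω| *
              A.indicator (fun _ => (1:ℝ)) ω
            + |(c (h+1) ω - c (p+1) ω) * ∑ i ∈ Finset.Ioc h (p + L), ξi i ω| *
              A.indicator (fun _ => (1:ℝ)) ω) ∂μ)
          = (∫ ω, (|∑ i ∈ Finset.Ioc p h, (c i ω - c (p+1) ω) * ξi i ω| *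
              A.indicator (fun _ => (1:ℝ)) ω
            + |∑ i ∈ Finset.Ioc h (p + L), (c i ω - c (h+1) ω) * ξi i ω| *
              A.indicator (fun _ => (1:ℝ)) ω) ∂μ)
            + (∫ ω, |(c (h+1) ω - c (p+1) ω) * ∑ i ∈ Finset.Ioc h (p + L), ξi i ω| *
              A.indicator (fun _ => (1:ℝ)) ω ∂μ) := integral_add (I1.add I2) I3
        _ = _ := by rw [integral_add I1 I2]
    rw [← hadd]
    exact integral_mono_of_nonneg
      (ae_of_all _ fun ω => mul_nonneg (abs_nonneg _) (hind_nonneg ω))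
      ((I1.add I2).add I3) (ae_of_all _ hpt1)
  -- bound the three integrals
  have b1 := IH l1 hl1L p (by omega) (fun i hi i' hi' ω hω =>
    hHol i (Finset.Ioc_subset_Ioc_right (by omega) hi)
      i' (Finset.Ioc_subset_Ioc_right (by omega) hi') ω hω)
  have b2 := IH l2 hl2L h (by omega) (fun i hi i' hi' ω hω =>
    hHol i (Finset.Ioc_subset_Ioc_left (by omega) (hePL ▸ hi))
      i' (Finset.Ioc_subset_Ioc_left (by omega) (hePL ▸ hi')) ω hω)
  rw [hePL] at b2
  have hScast : ((p + L : ℕ):ℝ) - ((h:ℕ):ℝ) = ((l2:ℕ):ℝ) := by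
    rw [hhdef]; push_cast
    have : (l1:ℝ) + (l2:ℝ) = (L:ℝ) := by exact_mod_cast hsum12
    linarith
  have hSb := hS h (p + L) (by omega) hpM
  rw [hScast] at hSb
  have b3 : ∫ ω, |(c (h+1) ω - c (p+1) ω) * ∑ i ∈ Finset.Ioc h (p + L), ξi i ω| *
        A.indicator (fun _ => (1:ℝ)) ω ∂μ
      ≤ K * (((l1:ℝ))/m) ^ α * (C₁ * (((l2:ℝ))/m) ^ ((1:ℝ)/2)) := by
    have hpt : ∀ ω, |(c (h+1) ω - c (p+1) ω) * ∑ i ∈ Finset.Ioc h (p + L), ξi i ω| *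
        A.indicator (fun _ => (1:ℝ)) ω
        ≤ K * (((l1:ℝ))/m) ^ α * |∑ i ∈ Finset.Ioc h (p + L), ξi i ω| := by
      intro ω
      by_cases hω : ω ∈ A
      · rw [Set.indicator_of_mem hω, mul_one, abs_mul]
        exact mul_le_mul_of_nonneg_right (hcoef3 ω hω) (abs_nonneg _)
      · rw [Set.indicator_of_notMem hω, mul_zero]
        positivity
    calc ∫ ω, |(c (h+1) ω - c (p+1) ω) * ∑ i ∈ Finset.Ioc h (p + L), ξi i ω| *
          A.indicator (fun _ => (1:ℝ)) ω ∂μ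
        ≤ ∫ ω, K * (((l1:ℝ))/m) ^ α * |∑ i ∈ Finset.Ioc h (p + L), ξi i ω| ∂μ :=
          integral_mono_of_nonneg
            (ae_of_all _ fun ω => mul_nonneg (abs_nonneg _) (hind_nonneg ω))
            (hintS.abs.const_mul _) (ae_of_all _ hpt)
      _ = K * (((l1:ℝ))/m) ^ α * ∫ ω, |∑ i ∈ Finset.Ioc h (p + L), ξi i ω| ∂μ :=
          integral_const_mul _ _
      _ ≤ K * (((l1:ℝ))/m) ^ α * (C₁ * (((l2:ℝ))/m) ^ ((1:ℝ)/2)) :=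
          mul_le_mul_of_nonneg_left hSb (by positivity)
  -- final arithmetic
  have A1 : (((l1:ℝ))/m) ^ (α + 1/2) + (((l2:ℝ))/m) ^ (α + 1/2)
      ≤ (((2:ℝ)/3) ^ (α + 1/2) + ((1:ℝ)/3) ^ (α + 1/2)) * (((L:ℝ))/m) ^ (α + 1/2) := by
    have e3 : (l1:ℝ) + (l2:ℝ) = (L:ℝ) := by exact_mod_cast hsum12
    have hmaj : (l1:ℝ) ^ (α + 1/2) + (l2:ℝ) ^ (α + 1/2)
        ≤ ((2:ℝ)/3 * L) ^ (α + 1/2) + ((1:ℝ)/3 * L) ^ (α + 1/2) := by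
      refine aux_majorize hβ1 (by positivity) (by positivity) (by linarith)
        ?_ (by exact_mod_cast hl2l1) ?_
      · have : (L:ℝ) ≤ 3 * (l2:ℝ) := by exact_mod_cast h3l2
        linarith
      · have : 3 * (l1:ℝ) ≤ 2 * (L:ℝ) := by exact_mod_cast h3l1
        linarith
    have d1 : (((l1:ℝ))/m) ^ (α + 1/2) = (l1:ℝ) ^ (α + 1/2) / (m:ℝ) ^ (α + 1/2) :=
      Real.div_rpow (by positivity) (by positivity) _
    have d2 : (((l2:ℝ))/m) ^ (α + 1/2) = (l2:ℝ) ^ (α + 1/2) / (m:ℝ) ^ (α + 1/2) :=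
      Real.div_rpow (by positivity) (by positivity) _
    have dL : (((L:ℝ))/m) ^ (α + 1/2) = (L:ℝ) ^ (α + 1/2) / (m:ℝ) ^ (α + 1/2) :=
      Real.div_rpow (by positivity) (by positivity) _
    have m1 : ((2:ℝ)/3 * L) ^ (α + 1/2) = ((2:ℝ)/3) ^ (α + 1/2) * (L:ℝ) ^ (α + 1/2) :=
      Real.mul_rpow (by norm_num) (by positivity)
    have m2 : ((1:ℝ)/3 * L) ^ (α + 1/2) = ((1:ℝ)/3) ^ (α + 1/2) * (L:ℝ) ^ (α + 1/2) :=
      Real.mul_rpow (by norm_num) (by positivity)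
    rw [m1, m2] at hmaj
    have hmβ : (0:ℝ) < (m:ℝ) ^ (α + 1/2) := Real.rpow_pos_of_pos hmpos _
    calc (((l1:ℝ))/m) ^ (α + 1/2) + (((l2:ℝ))/m) ^ (α + 1/2)
        = ((l1:ℝ) ^ (α + 1/2) + (l2:ℝ) ^ (α + 1/2)) / (m:ℝ) ^ (α + 1/2) := by
          rw [d1, d2, ← add_div]
      _ ≤ (((2:ℝ)/3) ^ (α + 1/2) * (L:ℝ) ^ (α + 1/2)
            + ((1:ℝ)/3) ^ (α + 1/2) * (L:ℝ) ^ (α + 1/2)) / (m:ℝ) ^ (α + 1/2) :=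
          (div_le_div_iff_of_pos_right hmβ).2 hmaj
      _ = (((2:ℝ)/3) ^ (α + 1/2) + ((1:ℝ)/3) ^ (α + 1/2)) * ((L:ℝ) ^ (α + 1/2) / (m:ℝ) ^ (α + 1/2)) := by
          ring
      _ = _ := by rw [dL]
  have A2 : (((l1:ℝ))/m) ^ α * (((l2:ℝ))/m) ^ ((1:ℝ)/2) ≤ (((L:ℝ))/m) ^ (α + 1/2) := by
    have u1 : (((l1:ℝ))/m) ^ α ≤ (((L:ℝ))/m) ^ α :=
      hmono _ _ (by positivity) (by exact_mod_cast hl1L.le)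
    have u2 : (((l2:ℝ))/m) ^ ((1:ℝ)/2) ≤ (((L:ℝ))/m) ^ ((1:ℝ)/2) :=
      Real.rpow_le_rpow (by positivity) (by gcongr) (by norm_num)
    calc (((l1:ℝ))/m) ^ α * (((l2:ℝ))/m) ^ ((1:ℝ)/2)
        ≤ (((L:ℝ))/m) ^ α * (((L:ℝ))/m) ^ ((1:ℝ)/2) :=
          mul_le_mul u1 u2 (by positivity) (by positivity)
      _ = (((L:ℝ))/m) ^ (α + 1/2) := (Real.rpow_add (by positivity) _ _).symm
  calc ∫ ω, |∑ i ∈ Finset.Ioc p (p + L), (c i ω - c (p+1) ω) * ξi i ω| *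
        A.indicator (fun _ => (1:ℝ)) ω ∂μ
      ≤ D * (K * C₁ * (((l1:ℝ))/m) ^ (α + 1/2))
        + D * (K * C₁ * (((l2:ℝ))/m) ^ (α + 1/2))
        + K * (((l1:ℝ))/m) ^ α * (C₁ * (((l2:ℝ))/m) ^ ((1:ℝ)/2)) :=
        step1.trans (add_le_add (add_le_add b1 b2) b3)
    _ = K * C₁ * (D * ((((l1:ℝ))/m) ^ (α + 1/2) + (((l2:ℝ))/m) ^ (α + 1/2))
          + (((l1:ℝ))/m) ^ α * (((l2:ℝ))/m) ^ ((1:ℝ)/2)) := by ring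
    _ ≤ K * C₁ * (D * ((((2:ℝ)/3) ^ (α + 1/2) + ((1:ℝ)/3) ^ (α + 1/2)) * (((L:ℝ))/m) ^ (α + 1/2))
          + (((L:ℝ))/m) ^ (α + 1/2)) := by
        refine mul_le_mul_of_nonneg_left (add_le_add ?_ A2) (mul_nonneg hK hC₁)
        exact mul_le_mul_of_nonneg_left A1 hD.le
    _ = ((((2:ℝ)/3) ^ (α + 1/2) * D + ((1:ℝ)/3) ^ (α + 1/2) * D + 1) * (((L:ℝ))/m) ^ (α + 1/2))
          * (K * C₁) := by ring
    _ ≤ (D * (((L:ℝ))/m) ^ (α + 1/2)) * (K * C₁) := by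
        refine mul_le_mul_of_nonneg_right
          (mul_le_mul_of_nonneg_right hDrec (by positivity)) (mul_nonneg hK hC₁)
    _ = D * (K * C₁ * (((L:ℝ))/m) ^ (α + 1/2)) := by ring

section H4
open Filter Topology

lemma holder_set_measurable {Ω : Type} [MeasurableSpace Ω] (T K α : ℝ) (hT : 0 < T)
    (hα : 0 < α) (f : Ω → ℝ → ℝ) (hf : ∀ t : ℝ, Measurable fun ω => f ω t)
    (hcont : ∀ ω, ContinuousOn (f ω) (Set.Icc (0 : ℝ) T)) :
    MeasurableSet {ω' : Ω | ∀ u ∈ Set.Icc (0 : ℝ) T, ∀ v ∈ Set.Icc (0 : ℝ) T,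
      |f ω' u - f ω' v| ≤ K * |u - v| ^ α} := by
  classical
  set s : Set ℝ := (Set.Icc (0:ℝ) T ∩ Set.range ((↑) : ℚ → ℝ)) ∪ {T} with hs
  have hscount : s.Countable :=
    (Set.Countable.mono Set.inter_subset_right (Set.countable_range _)).union
      (Set.countable_singleton T)
  have hssub : s ⊆ Set.Icc (0:ℝ) T := by
    intro x hx
    rcases hx with hx | hx
    · exact hx.1
    · rw [Set.mem_singleton_iff] at hx; subst hx; exact ⟨hT.le, le_refl _⟩
  -- density via sequences
  have hdense : ∀ u ∈ Set.Icc (0:ℝ) T, ∃ g : ℕ → ℝ,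
      (∀ k, g k ∈ s) ∧ Tendsto g atTop (𝓝 u) := by
    intro u hu
    by_cases huT : u = T
    · exact ⟨fun _ => T, fun _ => Or.inr rfl, by rw [huT]; exact tendsto_const_nhds⟩
    have huT' : u < T := lt_of_le_of_ne hu.2 huT
    have hpos : ∀ k : ℕ, u < u + (T - u) / ((k:ℝ) + 2) := by
      intro k
      have : (0:ℝ) < (T - u) / ((k:ℝ) + 2) := div_pos (by linarith) (by positivity)
      linarith
    choose g hg1 hg2 using fun k : ℕ => exists_rat_btwn (hpos k)
    refine ⟨fun k => (g k : ℝ), fun k => Or.inl ⟨⟨?_, ?_⟩, ⟨g k, rfl⟩⟩, ?_⟩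
    · exact le_of_lt (lt_of_le_of_lt hu.1 (hg1 k))
    · have h1 : (T - u) / ((k:ℝ) + 2) ≤ T - u :=
        div_le_self (by linarith) (by { have := (by exact_mod_cast Nat.zero_le k : (0:ℝ) ≤ (k:ℝ)); linarith })
      linarith [hg2 k]
    · have hlim : Tendsto (fun k : ℕ => u + (T - u) / ((k:ℝ) + 2)) atTop (𝓝 u) := by
        have h2 : Tendsto (fun k : ℕ => ((k:ℝ) + 2)) atTop atTop :=
          tendsto_atTop_add_const_right atTop 2 tendsto_natCast_atTop_atTop
        have h3 : Tendsto (fun k : ℕ => (T - u) / ((k:ℝ) + 2)) atTop (𝓝 0) := by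
          simpa [div_eq_mul_inv] using h2.inv_tendsto_atTop.const_mul (T - u)
        simpa using tendsto_const_nhds.add h3
      exact tendsto_of_tendsto_of_tendsto_of_le_of_le tendsto_const_nhds hlim
        (fun k => (hg1 k).le) (fun k => (hg2 k).le)
  have hset : {ω' : Ω | ∀ u ∈ Set.Icc (0 : ℝ) T, ∀ v ∈ Set.Icc (0 : ℝ) T,
        |f ω' u - f ω' v| ≤ K * |u - v| ^ α}
      = ⋂ u ∈ s, ⋂ v ∈ s, {ω' : Ω | |f ω' u - f ω' v| ≤ K * |u - v| ^ α} := by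
    ext ω
    simp only [Set.mem_setOf_eq, Set.mem_iInter]
    constructor
    · intro h u hu v hv
      exact h u (hssub hu) v (hssub hv)
    · intro h u hu v hv
      obtain ⟨gu, hgu_s, hgu_lim⟩ := hdense u hu
      obtain ⟨gv, hgv_s, hgv_lim⟩ := hdense v hv
      have h1 : Tendsto (fun k => f ω (gu k)) atTop (𝓝 (f ω u)) :=
        ((hcont ω u hu).tendsto).comp
          (tendsto_nhdsWithin_of_tendsto_nhds_of_eventually_within _ hgu_lim
            (Eventually.of_forall fun k => hssub (hgu_s k)))
      have h2 : Tendsto (fun k => f ω (gv k)) atTop (𝓝 (f ω v)) :=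
        ((hcont ω v hv).tendsto).comp
          (tendsto_nhdsWithin_of_tendsto_nhds_of_eventually_within _ hgv_lim
            (Eventually.of_forall fun k => hssub (hgv_s k)))
      have hL : Tendsto (fun k => |f ω (gu k) - f ω (gv k)|) atTop (𝓝 |f ω u - f ω v|) :=
        (h1.sub h2).abs
      have hR : Tendsto (fun k => K * |gu k - gv k| ^ α) atTop (𝓝 (K * |u - v| ^ α)) := by
        have hb : Tendsto (fun k => |gu k - gv k|) atTop (𝓝 |u - v|) :=
          (hgu_lim.sub hgv_lim).abs
        have hp : Tendsto (fun k => |gu k - gv k| ^ α) atTop (𝓝 (|u - v| ^ α)) :=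
          ((Real.continuousAt_rpow_const _ α (Or.inr hα.le)).tendsto).comp hb
        exact hp.const_mul K
      exact le_of_tendsto_of_tendsto' hL hR (fun k => h (gu k) (hgu_s k) (gv k) (hgv_s k))
  rw [hset]
  exact MeasurableSet.biInter hscount fun u _ =>
    MeasurableSet.biInter hscount fun v _ =>
      measurableSet_le (((hf u).sub (hf v)).abs) measurable_const

end H4

set_option maxHeartbeats 1000000

/-- Main expectation bound: for `T > 0`, `1/2 < α ≤ 1`, `1/2 < γ < α` and `C₀ > 0` there is
`C = C(α,γ,T,C₀) > 0` such that for random weights `ξ_{i,m}` satisfying (H2) with constant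
`C₀` and any continuous-in-time, measurable-in-ω process `f`,
`E[ sup_{t ∈ [0,T]} |R_{n,m}(t)| · 1_{‖f(ω,·)‖_α ≤ K} ] ≤ C K n^{1/2-α}` for all `K > 0`
and all `1 ≤ n ≤ m`, where
`R_{n,m}(t) = ∑_{j=1}^{⌊nt⌋} ∑_{i ∈ I_n(j)} (f(·,t_i) - f(·,u_{j-1})) ξ_{i,m}`. -/
theorem stmt_12 (T α γ C₀ : ℝ) (hT : 0 < T) (hα : 1 / 2 < α) (hα1 : α ≤ 1)
    (hγ : 1 / 2 < γ) (hγα : γ < α) (hC₀ : 0 < C₀) :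
    ∃ C > (0 : ℝ), ∀ (Ω : Type) (m0 : MeasurableSpace Ω) (μ : Measure Ω),
      IsProbabilityMeasure μ →
      ∀ ξ : ℕ → ℕ → Ω → ℝ,
      (∀ m i : ℕ, 1 ≤ m → Integrable (ξ m i) μ) →
      (∀ m : ℕ, 1 ≤ m → ∀ j k : ℕ, j < k → k ≤ ⌊(m : ℝ) * T⌋₊ →
        (∫⁻ ω, ENNReal.ofReal (|∑ i ∈ Finset.Icc (j + 1) k, ξ m i ω| ^ 4) ∂μ)
          ≤ ENNReal.ofReal (C₀ * (((k : ℝ) - (j : ℝ)) / m) ^ 2)) →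
      ∀ f : Ω → ℝ → ℝ,
      (∀ t : ℝ, Measurable fun ω => f ω t) →
      (∀ ω, ContinuousOn (f ω) (Set.Icc (0 : ℝ) T)) →
      ∀ K : ℝ, 0 < K → ∀ m n : ℕ, 1 ≤ n → n ≤ m →
      (∫ ω, (⨆ t : Set.Icc (0 : ℝ) T,
            |∑ j ∈ Finset.Icc 1 ⌊(n : ℝ) * (t : ℝ)⌋₊,
              ∑ i ∈ (Finset.Icc 1 ⌊(m : ℝ) * T⌋₊).filter
                  (fun i : ℕ => ((j : ℝ) - 1) / n ≤ (i : ℝ) / m ∧ (i : ℝ) / m < (j : ℝ) / n),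
                (f ω ((i : ℝ) / m) - f ω (((j : ℝ) - 1) / n)) * ξ m i ω|) *
          Set.indicator {ω' : Ω | ∀ u ∈ Set.Icc (0 : ℝ) T, ∀ v ∈ Set.Icc (0 : ℝ) T,
              |f ω' u - f ω' v| ≤ K * |u - v| ^ α} (fun _ => (1 : ℝ)) ω ∂μ)
        ≤ C * K * (n : ℝ) ^ (1 / 2 - α) := by
  classical
  have hα0 : 0 < α := by linarith
  have hβ1 : (1:ℝ) ≤ α + 1/2 := by linarith
  -- the contraction constant
  have hθlt : ((2:ℝ)/3) ^ (α + 1/2) + ((1:ℝ)/3) ^ (α + 1/2) < 1 := by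
    have h1 : ((2:ℝ)/3) ^ (α + 1/2) < ((2:ℝ)/3) ^ (1:ℝ) :=
      Real.rpow_lt_rpow_of_exponent_gt (by norm_num) (by norm_num) (by linarith)
    have h2 : ((1:ℝ)/3) ^ (α + 1/2) < ((1:ℝ)/3) ^ (1:ℝ) :=
      Real.rpow_lt_rpow_of_exponent_gt (by norm_num) (by norm_num) (by linarith)
    rw [Real.rpow_one] at h1 h2
    linarith
  have hDex : ∃ D : ℝ, 0 < D ∧
      ((2:ℝ)/3) ^ (α + 1/2) * D + ((1:ℝ)/3) ^ (α + 1/2) * D + 1 ≤ D := by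
    refine ⟨(1 - (((2:ℝ)/3) ^ (α + 1/2) + ((1:ℝ)/3) ^ (α + 1/2)))⁻¹,
      inv_pos.2 (by linarith), ?_⟩
    have h2 : (1 - (((2:ℝ)/3) ^ (α + 1/2) + ((1:ℝ)/3) ^ (α + 1/2))) *
        (1 - (((2:ℝ)/3) ^ (α + 1/2) + ((1:ℝ)/3) ^ (α + 1/2)))⁻¹ = 1 :=
      mul_inv_cancel₀ (by linarith)
    set E : ℝ := (1 - (((2:ℝ)/3) ^ (α + 1/2) + ((1:ℝ)/3) ^ (α + 1/2)))⁻¹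
    have h3 : E - (((2:ℝ)/3) ^ (α + 1/2) * E + ((1:ℝ)/3) ^ (α + 1/2) * E) = 1 := by
      linear_combination h2
    linarith [h3]
  obtain ⟨D, hD, hDrec⟩ := hDex
  set C₁ : ℝ := 2 * C₀ ^ ((1:ℝ)/4) with hC₁def
  have hC₁ : 0 < C₁ := by positivity
  refine ⟨(D + 1) * C₁ * (2:ℝ) ^ (α + 1/2) * T, by positivity, ?_⟩
  intro Ω m0 μ hprob ξ hξint hH2 f hfmeas hfcont K hK m n hn hnm
  have hm1 : 1 ≤ m := le_trans hn hnm
  have hmpos : (0:ℝ) < m := by exact_mod_cast hm1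
  have hnpos : (0:ℝ) < n := by exact_mod_cast hn
  have hnm' : (n:ℝ) ≤ (m:ℝ) := by exact_mod_cast hnm
  set M := ⌊(m:ℝ) * T⌋₊ with hMdef
  set N := ⌊(n:ℝ) * T⌋₊ with hNdef
  set A : Set Ω := {ω' : Ω | ∀ u ∈ Set.Icc (0 : ℝ) T, ∀ v ∈ Set.Icc (0 : ℝ) T,
      |f ω' u - f ω' v| ≤ K * |u - v| ^ α} with hAdef
  have hAmeas : MeasurableSet A := holder_set_measurable T K α hT hα0 f hfmeas hfcont
  have hAmem : ∀ ω : Ω, ω ∈ A → ∀ u ∈ Set.Icc (0 : ℝ) T, ∀ v ∈ Set.Icc (0 : ℝ) T,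
      |f ω u - f ω v| ≤ K * |u - v| ^ α := by
    intro ω hω
    rw [hAdef] at hω
    exact hω
  -- first moment bound for increments of partial sums
  have hS : ∀ p q : ℕ, p < q → q ≤ M →
      ∫ ω, |∑ i ∈ Finset.Ioc p q, ξ m i ω| ∂μ ≤ C₁ * (((q:ℝ) - p)/m) ^ ((1:ℝ)/2) := by
    intro p q hpq hqM
    have h4 := hH2 m hm1 p q hpq hqM
    rw [Finset.Icc_add_one_left_eq_Ioc] at h4
    have hpq' : (p:ℝ) < q := by exact_mod_cast hpq
    have hd : (0:ℝ) < ((q:ℝ) - p)/m := div_pos (by linarith) hmpos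
    have hV : 0 < C₀ * (((q:ℝ) - p)/m) ^ 2 := by positivity
    have hmb := moment_bound μ (fun ω => ∑ i ∈ Finset.Ioc p q, ξ m i ω)
      (integrable_finset_sum _ fun i _ => hξint m i hm1) _ hV h4
    have he : (C₀ * (((q:ℝ) - p)/m) ^ 2) ^ ((1:ℝ)/4)
        = C₀ ^ ((1:ℝ)/4) * (((q:ℝ) - p)/m) ^ ((1:ℝ)/2) := by
      rw [Real.mul_rpow hC₀.le (by positivity)]
      congr 1
      rw [← Real.rpow_natCast (((q:ℝ) - p)/m) 2, ← Real.rpow_mul hd.le]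
      norm_num
    calc ∫ ω, |∑ i ∈ Finset.Ioc p q, ξ m i ω| ∂μ
        ≤ 2 * (C₀ * (((q:ℝ) - p)/m) ^ 2) ^ ((1:ℝ)/4) := hmb
      _ = C₁ * (((q:ℝ) - p)/m) ^ ((1:ℝ)/2) := by rw [he, hC₁def]; ring
  -- notation for indicator positivity
  have hind_nonneg : ∀ ω, 0 ≤ A.indicator (fun _ => (1:ℝ)) ω :=
    fun ω => Set.indicator_nonneg (fun _ _ => zero_le_one) ω
  -- facts about time points
  have hMT : (M:ℝ) ≤ (m:ℝ) * T := Nat.floor_le (by positivity)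
  have hNT : (N:ℝ) ≤ (n:ℝ) * T := Nat.floor_le (by positivity)
  -- per block bound
  have hblock : ∀ j ∈ Finset.Icc 1 N,
      Integrable (fun ω =>
        |∑ i ∈ (Finset.Icc 1 M).filter
            (fun i : ℕ => ((j : ℝ) - 1) / n ≤ (i : ℝ) / m ∧ (i : ℝ) / m < (j : ℝ) / n),
          (f ω ((i : ℝ) / m) - f ω (((j : ℝ) - 1) / n)) * ξ m i ω| *
          A.indicator (fun _ => (1:ℝ)) ω) μ ∧
      (∫ ω, |∑ i ∈ (Finset.Icc 1 M).filter
            (fun i : ℕ => ((j : ℝ) - 1) / n ≤ (i : ℝ) / m ∧ (i : ℝ) / m < (j : ℝ) / n),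
          (f ω ((i : ℝ) / m) - f ω (((j : ℝ) - 1) / n)) * ξ m i ω| *
          A.indicator (fun _ => (1:ℝ)) ω ∂μ)
        ≤ (D + 1) * (K * C₁ * ((2:ℝ)/n) ^ (α + 1/2)) := by
    intro j hj
    obtain ⟨hj1, hjN⟩ := Finset.mem_Icc.1 hj
    set F := (Finset.Icc 1 M).filter
      (fun i : ℕ => ((j : ℝ) - 1) / n ≤ (i : ℝ) / m ∧ (i : ℝ) / m < (j : ℝ) / n) with hFdef
    set c : ℕ → Ω → ℝ := fun i ω => f ω ((i : ℝ) / m) - f ω (((j : ℝ) - 1) / n) with hcdef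
    have hcmeas : ∀ i, AEStronglyMeasurable (c i) μ :=
      fun i => ((hfmeas _).sub (hfmeas _)).aestronglyMeasurable
    have hj1' : (1:ℝ) ≤ (j:ℝ) := by exact_mod_cast hj1
    have hjN' : (j:ℝ) ≤ (N:ℝ) := by exact_mod_cast hjN
    have hv0 : 0 ≤ ((j:ℝ) - 1)/n := div_nonneg (by linarith) hnpos.le
    have hvT : ((j:ℝ) - 1)/n ≤ T := by
      rw [div_le_iff₀ hnpos]
      nlinarith [hNT]
    have hvmem : ((j:ℝ) - 1)/n ∈ Set.Icc (0:ℝ) T := ⟨hv0, hvT⟩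
    have htimem : ∀ i : ℕ, i ≤ M → (i:ℝ)/m ∈ Set.Icc (0:ℝ) T := by
      intro i hi
      constructor
      · positivity
      · rw [div_le_iff₀ hmpos]
        have : (i:ℝ) ≤ (M:ℝ) := by exact_mod_cast hi
        nlinarith [hMT]
    -- Hölder property of coefficients on A
    have hHolF : ∀ i : ℕ, i ≤ M → ∀ i' : ℕ, i' ≤ M → ∀ ω ∈ A,
        |c i ω - c i' ω| ≤ K * ((|(i:ℝ) - (i':ℝ)|)/m) ^ α := by
      intro i hi i' hi' ω hω
      have h := hAmem ω hω ((i:ℝ)/m) (htimem i hi) ((i':ℝ)/m) (htimem i' hi')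
      have he : |(i:ℝ)/m - (i':ℝ)/m| = (|(i:ℝ) - (i':ℝ)|)/m := by
        rw [div_sub_div_same, abs_div, abs_of_pos hmpos]
      have he2 : c i ω - c i' ω = f ω ((i:ℝ)/m) - f ω ((i':ℝ)/m) := by
        rw [hcdef]; ring
      rw [he2, ← he]
      exact h
    show Integrable (fun ω => |∑ i ∈ F, c i ω * ξ m i ω| *
        A.indicator (fun _ => (1:ℝ)) ω) μ ∧
      (∫ ω, |∑ i ∈ F, c i ω * ξ m i ω| * A.indicator (fun _ => (1:ℝ)) ω ∂μ)
        ≤ (D + 1) * (K * C₁ * ((2:ℝ)/n) ^ (α + 1/2))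
    rcases Finset.eq_empty_or_nonempty F with hF | hF
    · constructor
      · simp only [hF, Finset.sum_empty, abs_zero, zero_mul]
        exact integrable_const 0 |>.congr (ae_of_all _ fun ω => rfl)
      · simp only [hF, Finset.sum_empty, abs_zero, zero_mul, integral_zero]
        positivity
    -- nonempty case
    obtain ⟨p, hpF, hpmin⟩ := F.exists_min_image id hF
    obtain ⟨q, hqF, hqmax⟩ := F.exists_max_image id hF
    have hpmem := Finset.mem_filter.1 hpF
    have hqmem := Finset.mem_filter.1 hqF
    obtain ⟨hp1, hpM⟩ := Finset.mem_Icc.1 hpmem.1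
    obtain ⟨hq1, hqM⟩ := Finset.mem_Icc.1 hqmem.1
    have hp_le_q : p ≤ q := hpmin q hqF
    have hFIcc : F = Finset.Icc p q := by
      ext i
      constructor
      · intro hi
        exact Finset.mem_Icc.2 ⟨hpmin i hi, hqmax i hi⟩
      · intro hi
        obtain ⟨hpi, hiq⟩ := Finset.mem_Icc.1 hi
        have hpi' : (p:ℝ) ≤ (i:ℝ) := by exact_mod_cast hpi
        have hiq' : (i:ℝ) ≤ (q:ℝ) := by exact_mod_cast hiq
        refine Finset.mem_filter.2 ⟨Finset.mem_Icc.2 ⟨le_trans hp1 hpi, le_trans hiq hqM⟩, ?_, ?_⟩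
        · calc ((j:ℝ) - 1)/n ≤ (p:ℝ)/m := hpmem.2.1
            _ ≤ (i:ℝ)/m := by gcongr
        · calc (i:ℝ)/m ≤ (q:ℝ)/m := by gcongr
            _ < (j:ℝ)/n := hqmem.2.2
    have hIoc : Finset.Ioc (p - 1) q = Finset.Icc p q := by
      rw [← Finset.Icc_add_one_left_eq_Ioc]
      congr 1
      omega
    have hqe : (p - 1) + (q - p + 1) = q := by omega
    have hpe : (p - 1) + 1 = p := by omega
    -- the real inequalities from membership
    have hplow : ((j:ℝ) - 1) * m ≤ (p:ℝ) * n := by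
      have := hpmem.2.1
      rwa [div_le_div_iff₀ hnpos hmpos] at this
    have hqhigh : (q:ℝ) * n < (j:ℝ) * m := by
      have := hqmem.2.2
      rwa [div_lt_div_iff₀ hmpos hnpos] at this
    have hLcast : ((q - p + 1 : ℕ):ℝ) = (q:ℝ) - (p:ℝ) + 1 := by
      push_cast [hp_le_q]; ring
    have hlen : ((q - p + 1 : ℕ):ℝ)/m ≤ 2/n := by
      rw [hLcast, div_le_div_iff₀ hmpos hnpos]
      linarith [hplow, hqhigh, hnm']
    -- coefficient bound on the whole block
    have hcoefF : ∀ i ∈ F, ∀ ω ∈ A, |c i ω| ≤ K * ((1:ℝ)/n) ^ α := by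
      intro i hi ω hω
      have himem := Finset.mem_filter.1 hi
      obtain ⟨hi1, hiM⟩ := Finset.mem_Icc.1 himem.1
      have h := hAmem ω hω ((i:ℝ)/m) (htimem i hiM) (((j:ℝ) - 1)/n) hvmem
      have hjn : (j:ℝ)/n = ((j:ℝ) - 1)/n + 1/n := by
        rw [← add_div]; ring_nf
      have habs : |(i:ℝ)/m - (((j:ℝ) - 1)/n)| ≤ 1/n := by
        rw [abs_of_nonneg (by linarith [himem.2.1])]
        have := himem.2.2
        rw [hjn] at this
        linarith
      calc |c i ω| ≤ K * |(i:ℝ)/m - (((j:ℝ) - 1)/n)| ^ α := h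
        _ ≤ K * ((1:ℝ)/n) ^ α := by
            exact mul_le_mul_of_nonneg_left
              (Real.rpow_le_rpow (abs_nonneg _) habs hα0.le) hK.le
    -- nonempty block: interval structure established; now the estimates
    have hFIoc : Finset.Ioc (p - 1) q = F := by rw [hIoc, ← hFIcc]
    have hbase : ∀ ω ∈ A, |c p ω| ≤ K * ((1:ℝ)/n) ^ α := fun ω hω => hcoefF p hpF ω hω
    have hcsub : ∀ i ∈ Finset.Ioc (p - 1) q, ∀ ω ∈ A,
        |c i ω - c p ω| ≤ 2 * (K * ((1:ℝ)/n) ^ α) := by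
      intro i hi ω hω
      have h1 := hcoefF i (hFIoc ▸ hi) ω hω
      have h2 := hbase ω hω
      calc |c i ω - c p ω| ≤ |c i ω| + |c p ω| := abs_sub _ _
        _ ≤ 2 * (K * ((1:ℝ)/n) ^ α) := by linarith
    -- dyadic estimate for the centered sum
    have hdy := dyadic_bound μ A hAmeas (ξ m) (fun i => hξint m i hm1) m M
      (by omega) C₁ hC₁.le hS α K D hα0 hβ1 hK.le hD hDrec c hcmeas
      (q - p + 1) (p - 1) (by omega)
      (by
        intro i hi i' hi' ω hω
        have hi2 := (Finset.mem_Ioc.1 hi).2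
        have hi2' := (Finset.mem_Ioc.1 hi').2
        exact hHolF i (by omega) i' (by omega) ω hω)
    rw [hqe, hpe] at hdy
    have hrelax : (((q - p + 1 : ℕ):ℝ)/m) ^ (α + 1/2) ≤ ((2:ℝ)/n) ^ (α + 1/2) :=
      Real.rpow_le_rpow (by positivity) hlen (by linarith)
    have hdy' : ∫ ω, |∑ i ∈ Finset.Ioc (p - 1) q, (c i ω - c p ω) * ξ m i ω| *
          A.indicator (fun _ => (1:ℝ)) ω ∂μ
        ≤ D * (K * C₁ * ((2:ℝ)/n) ^ (α + 1/2)) :=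
      hdy.trans (mul_le_mul_of_nonneg_left
        (mul_le_mul_of_nonneg_left hrelax (by positivity)) hD.le)
    -- second piece
    have hSint : Integrable (fun ω => ∑ i ∈ Finset.Ioc (p - 1) q, ξ m i ω) μ :=
      integrable_finset_sum _ fun i _ => hξint m i hm1
    have hSb := hS (p - 1) q (by omega) hqM
    have ep1 : ((p - 1 : ℕ):ℝ) = (p:ℝ) - 1 := by
      push_cast [Nat.cast_sub (by omega : 1 ≤ p)]
      ring
    have hlen' : ((q:ℝ) - ((p - 1:ℕ):ℝ))/m ≤ 2/n := by
      rw [ep1]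
      have := hlen
      rw [hLcast] at this
      calc ((q:ℝ) - ((p:ℝ) - 1))/m = ((q:ℝ) - (p:ℝ) + 1)/m := by ring_nf
        _ ≤ 2/n := this
    have hSb' : ∫ ω, |∑ i ∈ Finset.Ioc (p - 1) q, ξ m i ω| ∂μ
        ≤ C₁ * ((2:ℝ)/n) ^ ((1:ℝ)/2) := by
      refine hSb.trans (mul_le_mul_of_nonneg_left ?_ hC₁.le)
      have hqp1 : ((p - 1 : ℕ):ℝ) ≤ (q:ℝ) := by
        exact_mod_cast (by omega : p - 1 ≤ q)
      exact Real.rpow_le_rpow (div_nonneg (by linarith) hmpos.le) hlen' (by norm_num)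
    -- integrabilities
    have IB : Integrable (fun ω => |∑ i ∈ F, c i ω * ξ m i ω| *
        A.indicator (fun _ => (1:ℝ)) ω) μ :=
      integrable_helper μ A hAmeas F c (ξ m) (fun i _ => hcmeas i)
        (fun i _ => hξint m i hm1) (fun _ => K * ((1:ℝ)/n) ^ α)
        (fun i _ => by positivity) hcoefF
    have I0 : Integrable (fun ω => |∑ i ∈ Finset.Ioc (p - 1) q,
        (c i ω - c p ω) * ξ m i ω| * A.indicator (fun _ => (1:ℝ)) ω) μ :=
      integrable_helper μ A hAmeas _ (fun i ω => c i ω - c p ω) (ξ m)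
        (fun i _ => (hcmeas i).sub (hcmeas p)) (fun i _ => hξint m i hm1)
        (fun _ => 2 * (K * ((1:ℝ)/n) ^ α)) (fun i _ => by positivity) hcsub
    have I0' : Integrable (fun ω => |∑ i ∈ Finset.Ioc (p - 1) q,
        c p ω * ξ m i ω| * A.indicator (fun _ => (1:ℝ)) ω) μ :=
      integrable_helper μ A hAmeas _ (fun _ ω => c p ω) (ξ m)
        (fun i _ => hcmeas p) (fun i _ => hξint m i hm1)
        (fun _ => K * ((1:ℝ)/n) ^ α) (fun i _ => by positivity)
        (fun i _ ω hω => hbase ω hω)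
    -- decomposition
    have keyB : ∀ ω, ∑ i ∈ F, c i ω * ξ m i ω
        = (∑ i ∈ Finset.Ioc (p - 1) q, (c i ω - c p ω) * ξ m i ω)
          + ∑ i ∈ Finset.Ioc (p - 1) q, c p ω * ξ m i ω := by
      intro ω
      rw [← hFIoc, ← Finset.sum_add_distrib]
      exact Finset.sum_congr rfl fun i _ => by ring
    have hpt : ∀ ω, |∑ i ∈ F, c i ω * ξ m i ω| * A.indicator (fun _ => (1:ℝ)) ω
        ≤ |∑ i ∈ Finset.Ioc (p - 1) q, (c i ω - c p ω) * ξ m i ω| *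
            A.indicator (fun _ => (1:ℝ)) ω
          + |∑ i ∈ Finset.Ioc (p - 1) q, c p ω * ξ m i ω| *
            A.indicator (fun _ => (1:ℝ)) ω := by
      intro ω
      rw [keyB ω]
      calc |(∑ i ∈ Finset.Ioc (p - 1) q, (c i ω - c p ω) * ξ m i ω)
            + ∑ i ∈ Finset.Ioc (p - 1) q, c p ω * ξ m i ω| *
            A.indicator (fun _ => (1:ℝ)) ω
          ≤ (|∑ i ∈ Finset.Ioc (p - 1) q, (c i ω - c p ω) * ξ m i ω|
            + |∑ i ∈ Finset.Ioc (p - 1) q, c p ω * ξ m i ω|) *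
            A.indicator (fun _ => (1:ℝ)) ω :=
            mul_le_mul_of_nonneg_right (abs_add_le _ _) (hind_nonneg ω)
        _ = _ := by ring
    have hsplit : ∫ ω, |∑ i ∈ F, c i ω * ξ m i ω| * A.indicator (fun _ => (1:ℝ)) ω ∂μ
        ≤ (∫ ω, |∑ i ∈ Finset.Ioc (p - 1) q, (c i ω - c p ω) * ξ m i ω| *
            A.indicator (fun _ => (1:ℝ)) ω ∂μ)
          + ∫ ω, |∑ i ∈ Finset.Ioc (p - 1) q, c p ω * ξ m i ω| *
            A.indicator (fun _ => (1:ℝ)) ω ∂μ := by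
      rw [← integral_add I0 I0']
      exact integral_mono_of_nonneg
        (ae_of_all _ fun ω => mul_nonneg (abs_nonneg _) (hind_nonneg ω))
        (I0.add I0') (ae_of_all _ hpt)
    -- bound the second integral
    have hb2 : ∫ ω, |∑ i ∈ Finset.Ioc (p - 1) q, c p ω * ξ m i ω| *
          A.indicator (fun _ => (1:ℝ)) ω ∂μ
        ≤ K * ((1:ℝ)/n) ^ α * (C₁ * ((2:ℝ)/n) ^ ((1:ℝ)/2)) := by
      have hpt2 : ∀ ω, |∑ i ∈ Finset.Ioc (p - 1) q, c p ω * ξ m i ω| *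
            A.indicator (fun _ => (1:ℝ)) ω
          ≤ K * ((1:ℝ)/n) ^ α * |∑ i ∈ Finset.Ioc (p - 1) q, ξ m i ω| := by
        intro ω
        rw [← Finset.mul_sum]
        by_cases hω : ω ∈ A
        · rw [Set.indicator_of_mem hω, mul_one, abs_mul]
          exact mul_le_mul_of_nonneg_right (hbase ω hω) (abs_nonneg _)
        · rw [Set.indicator_of_notMem hω, mul_zero]
          positivity
      calc ∫ ω, |∑ i ∈ Finset.Ioc (p - 1) q, c p ω * ξ m i ω| *
            A.indicator (fun _ => (1:ℝ)) ω ∂μ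
          ≤ ∫ ω, K * ((1:ℝ)/n) ^ α * |∑ i ∈ Finset.Ioc (p - 1) q, ξ m i ω| ∂μ :=
            integral_mono_of_nonneg
              (ae_of_all _ fun ω => mul_nonneg (abs_nonneg _) (hind_nonneg ω))
              (hSint.abs.const_mul _) (ae_of_all _ hpt2)
        _ = K * ((1:ℝ)/n) ^ α * ∫ ω, |∑ i ∈ Finset.Ioc (p - 1) q, ξ m i ω| ∂μ :=
            integral_const_mul _ _
        _ ≤ K * ((1:ℝ)/n) ^ α * (C₁ * ((2:ℝ)/n) ^ ((1:ℝ)/2)) :=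
            mul_le_mul_of_nonneg_left hSb' (by positivity)
    -- combine the two pieces
    refine ⟨IB, ?_⟩
    have c1 : ((1:ℝ)/n) ^ α ≤ ((2:ℝ)/n) ^ α :=
      Real.rpow_le_rpow (by positivity)
        ((div_le_div_iff_of_pos_right hnpos).2 one_le_two) hα0.le
    have c2 : ((2:ℝ)/n) ^ α * ((2:ℝ)/n) ^ ((1:ℝ)/2) = ((2:ℝ)/n) ^ (α + 1/2) :=
      (Real.rpow_add (by positivity) _ _).symm
    calc ∫ ω, |∑ i ∈ F, c i ω * ξ m i ω| * A.indicator (fun _ => (1:ℝ)) ω ∂μ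
        ≤ D * (K * C₁ * ((2:ℝ)/n) ^ (α + 1/2))
          + K * ((1:ℝ)/n) ^ α * (C₁ * ((2:ℝ)/n) ^ ((1:ℝ)/2)) :=
          hsplit.trans (add_le_add hdy' hb2)
      _ ≤ D * (K * C₁ * ((2:ℝ)/n) ^ (α + 1/2))
          + K * ((2:ℝ)/n) ^ α * (C₁ * ((2:ℝ)/n) ^ ((1:ℝ)/2)) := by
          refine add_le_add (le_refl _) ?_
          refine mul_le_mul_of_nonneg_right (mul_le_mul_of_nonneg_left c1 hK.le)
            (by positivity)
      _ = (D + 1) * (K * C₁ * ((2:ℝ)/n) ^ (α + 1/2)) := by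
          rw [← c2]; ring
  -- assemble over the blocks
  haveI : Nonempty (Set.Icc (0:ℝ) T) := Set.Nonempty.to_subtype (Set.nonempty_Icc.2 hT.le)
  have hgInt : Integrable (fun ω => ∑ j ∈ Finset.Icc 1 N,
      |∑ i ∈ (Finset.Icc 1 M).filter
          (fun i : ℕ => ((j : ℝ) - 1) / n ≤ (i : ℝ) / m ∧ (i : ℝ) / m < (j : ℝ) / n),
        (f ω ((i : ℝ) / m) - f ω (((j : ℝ) - 1) / n)) * ξ m i ω| *
        A.indicator (fun _ => (1:ℝ)) ω) μ :=
    integrable_finset_sum _ fun j hj => (hblock j hj).1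
  have h0 : ∀ ω, 0 ≤ (⨆ t : Set.Icc (0 : ℝ) T,
      |∑ j ∈ Finset.Icc 1 ⌊(n : ℝ) * (t : ℝ)⌋₊,
        ∑ i ∈ (Finset.Icc 1 M).filter
            (fun i : ℕ => ((j : ℝ) - 1) / n ≤ (i : ℝ) / m ∧ (i : ℝ) / m < (j : ℝ) / n),
          (f ω ((i : ℝ) / m) - f ω (((j : ℝ) - 1) / n)) * ξ m i ω|) *
      A.indicator (fun _ => (1:ℝ)) ω :=
    fun ω => mul_nonneg (Real.iSup_nonneg fun t => abs_nonneg _) (hind_nonneg ω)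
  have hle : ∀ ω, (⨆ t : Set.Icc (0 : ℝ) T,
      |∑ j ∈ Finset.Icc 1 ⌊(n : ℝ) * (t : ℝ)⌋₊,
        ∑ i ∈ (Finset.Icc 1 M).filter
            (fun i : ℕ => ((j : ℝ) - 1) / n ≤ (i : ℝ) / m ∧ (i : ℝ) / m < (j : ℝ) / n),
          (f ω ((i : ℝ) / m) - f ω (((j : ℝ) - 1) / n)) * ξ m i ω|) *
      A.indicator (fun _ => (1:ℝ)) ω
      ≤ ∑ j ∈ Finset.Icc 1 N,
        |∑ i ∈ (Finset.Icc 1 M).filter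
            (fun i : ℕ => ((j : ℝ) - 1) / n ≤ (i : ℝ) / m ∧ (i : ℝ) / m < (j : ℝ) / n),
          (f ω ((i : ℝ) / m) - f ω (((j : ℝ) - 1) / n)) * ξ m i ω| *
          A.indicator (fun _ => (1:ℝ)) ω := by
    intro ω
    by_cases hω : ω ∈ A
    · simp only [Set.indicator_of_mem hω, mul_one]
      refine ciSup_le fun t => ?_
      have hfl : ⌊(n : ℝ) * (t : ℝ)⌋₊ ≤ N :=
        Nat.floor_le_floor (mul_le_mul_of_nonneg_left t.2.2 (by positivity))
      calc |∑ j ∈ Finset.Icc 1 ⌊(n : ℝ) * (t : ℝ)⌋₊,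
            ∑ i ∈ (Finset.Icc 1 M).filter
                (fun i : ℕ => ((j : ℝ) - 1) / n ≤ (i : ℝ) / m ∧ (i : ℝ) / m < (j : ℝ) / n),
              (f ω ((i : ℝ) / m) - f ω (((j : ℝ) - 1) / n)) * ξ m i ω|
          ≤ ∑ j ∈ Finset.Icc 1 ⌊(n : ℝ) * (t : ℝ)⌋₊,
            |∑ i ∈ (Finset.Icc 1 M).filter
                (fun i : ℕ => ((j : ℝ) - 1) / n ≤ (i : ℝ) / m ∧ (i : ℝ) / m < (j : ℝ) / n),
              (f ω ((i : ℝ) / m) - f ω (((j : ℝ) - 1) / n)) * ξ m i ω| :=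
            Finset.abs_sum_le_sum_abs _ _
        _ ≤ ∑ j ∈ Finset.Icc 1 N,
            |∑ i ∈ (Finset.Icc 1 M).filter
                (fun i : ℕ => ((j : ℝ) - 1) / n ≤ (i : ℝ) / m ∧ (i : ℝ) / m < (j : ℝ) / n),
              (f ω ((i : ℝ) / m) - f ω (((j : ℝ) - 1) / n)) * ξ m i ω| :=
            Finset.sum_le_sum_of_subset_of_nonneg
              (Finset.Icc_subset_Icc_right hfl) (fun _ _ _ => abs_nonneg _)
    · simp only [Set.indicator_of_notMem hω, mul_zero]
      simp
  -- final chain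
  calc (∫ ω, (⨆ t : Set.Icc (0 : ℝ) T,
        |∑ j ∈ Finset.Icc 1 ⌊(n : ℝ) * (t : ℝ)⌋₊,
          ∑ i ∈ (Finset.Icc 1 M).filter
              (fun i : ℕ => ((j : ℝ) - 1) / n ≤ (i : ℝ) / m ∧ (i : ℝ) / m < (j : ℝ) / n),
            (f ω ((i : ℝ) / m) - f ω (((j : ℝ) - 1) / n)) * ξ m i ω|) *
        A.indicator (fun _ => (1:ℝ)) ω ∂μ)
      ≤ ∫ ω, (∑ j ∈ Finset.Icc 1 N,
        |∑ i ∈ (Finset.Icc 1 M).filter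
            (fun i : ℕ => ((j : ℝ) - 1) / n ≤ (i : ℝ) / m ∧ (i : ℝ) / m < (j : ℝ) / n),
          (f ω ((i : ℝ) / m) - f ω (((j : ℝ) - 1) / n)) * ξ m i ω| *
          A.indicator (fun _ => (1:ℝ)) ω) ∂μ :=
      integral_mono_of_nonneg (ae_of_all _ h0) hgInt (ae_of_all _ hle)
    _ = ∑ j ∈ Finset.Icc 1 N, ∫ ω,
        |∑ i ∈ (Finset.Icc 1 M).filter
            (fun i : ℕ => ((j : ℝ) - 1) / n ≤ (i : ℝ) / m ∧ (i : ℝ) / m < (j : ℝ) / n),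
          (f ω ((i : ℝ) / m) - f ω (((j : ℝ) - 1) / n)) * ξ m i ω| *
          A.indicator (fun _ => (1:ℝ)) ω ∂μ :=
      integral_finset_sum _ fun j hj => (hblock j hj).1
    _ ≤ ∑ _j ∈ Finset.Icc 1 N, (D + 1) * (K * C₁ * ((2:ℝ)/n) ^ (α + 1/2)) :=
      Finset.sum_le_sum fun j hj => (hblock j hj).2
    _ = (N:ℝ) * ((D + 1) * (K * C₁ * ((2:ℝ)/n) ^ (α + 1/2))) := by
      rw [Finset.sum_const, Nat.card_Icc]
      simp [nsmul_eq_mul]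
    _ ≤ ((n:ℝ) * T) * ((D + 1) * (K * C₁ * ((2:ℝ)/n) ^ (α + 1/2))) :=
      mul_le_mul_of_nonneg_right hNT (by positivity)
    _ = (D + 1) * C₁ * (2:ℝ) ^ (α + 1/2) * T * K * ((n:ℝ) * ((n:ℝ)) ^ (-(α + 1/2))) := by
      rw [div_eq_mul_inv, Real.mul_rpow (by norm_num) (by positivity),
        Real.inv_rpow (by positivity), ← Real.rpow_neg (by positivity)]
      ring
    _ = (D + 1) * C₁ * (2:ℝ) ^ (α + 1/2) * T * K * ((n:ℝ)) ^ (1/2 - α) := by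
      rw [show (1/2 - α : ℝ) = 1 + -(α + 1/2) from by ring,
        Real.rpow_add hnpos, Real.rpow_one]
end

section
/- Let T > 0 and α ∈ (1/2, 1]. Let (Ω, F, P) be a probability space and, for each integer m ≥ 1, let ξ_{1,m}, …, ξ_{⌊mT⌋,m} be random variables satisfying condition (H2): there is a constant C₀ > 0 (independent of m) with E[|Σ_{i=j+1}^{k} ξ_{i,m}|^4] ≤ C₀ ((k−j)/m)² for all 0 ≤ j < k ≤ ⌊mT⌋. Let f : Ω × [0,T] → ℝ be such that f(·, t) is measurable for each t and, for P-almost every ω, the path f(ω, ·) is α-Hölder continuous on [0,T]. Define R_{n,m}(t) = Σ_{j=1}^{⌊nt⌋} Σ_{i ∈ I_n(j)} (f(·, t_i) − f(·, u_{j−1})) ξ_{i,m}. Then for every ε > 0: lim_{n→∞} limsup_{m→∞, m ≥ n} P( sup_{t ∈ [0,T]} |R_{n,m}(t)| > ε ) = 0. -/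
open MeasureTheory Finset Filter Topology
open scoped ENNReal NNReal

/-- L¹ bound from an L⁴ bound on a probability space. -/
lemma moment14 {Ω : Type} [MeasurableSpace Ω] (μ : Measure Ω) [IsProbabilityMeasure μ]
    (g : Ω → ℝ) (hg : Measurable g) (B : ℝ)
    (h4 : (∫⁻ ω, ENNReal.ofReal (|g ω| ^ 4) ∂μ) ≤ ENNReal.ofReal B) (hB : 0 < B) :
    (∫⁻ ω, ENNReal.ofReal |g ω| ∂μ) ≤ ENNReal.ofReal (B ^ ((1:ℝ)/4)) := by
  have h1 : (∫⁻ ω, ENNReal.ofReal |g ω| ∂μ) = eLpNorm g 1 μ := by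
    rw [eLpNorm_one_eq_lintegral_enorm]
    refine lintegral_congr fun ω => ?_
    rw [Real.enorm_eq_ofReal_abs]
  have h4' : eLpNorm g 4 μ ≤ (ENNReal.ofReal B) ^ ((1:ℝ)/4) := by
    rw [eLpNorm_eq_lintegral_rpow_enorm_toReal (by norm_num) (by norm_num)]
    have : (4 : ℝ≥0∞).toReal = (4:ℝ) := by norm_num
    rw [this]
    have hpt : ∀ ω : Ω, ‖g ω‖ₑ ^ (4:ℝ) = ENNReal.ofReal (|g ω| ^ 4) := by
      intro ω
      rw [Real.enorm_eq_ofReal_abs,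
        show ((4:ℝ)) = ((4:ℕ):ℝ) by norm_num, ENNReal.rpow_natCast,
        ← ENNReal.ofReal_pow (abs_nonneg _)]
    calc (∫⁻ ω, ‖g ω‖ₑ ^ (4:ℝ) ∂μ) ^ ((1:ℝ)/4)
        = (∫⁻ ω, ENNReal.ofReal (|g ω| ^ 4) ∂μ) ^ ((1:ℝ)/4) := by
          congr 1; exact lintegral_congr hpt
      _ ≤ (ENNReal.ofReal B) ^ ((1:ℝ)/4) := by
          exact ENNReal.rpow_le_rpow h4 (by norm_num)
  have hle : eLpNorm g 1 μ ≤ eLpNorm g 4 μ :=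
    eLpNorm_le_eLpNorm_of_exponent_le (by norm_num) hg.aestronglyMeasurable
  rw [h1]
  exact hle.trans (h4'.trans (le_of_eq (ENNReal.ofReal_rpow_of_pos hB)))

lemma numeric (α C₀ : ℝ) (hα : 1/2 < α) (hC₀ : 0 < C₀) (x y : ℝ) (hx : 0 < x) (hy : 0 < y)
    (hx2 : x ≤ 2/3 * (x+y)) (hy2 : y ≤ 2/3 * (x+y)) :
    C₀ ^ ((1:ℝ)/4) / (1 - (2/3 : ℝ) ^ (α - 1/2)) * x ^ (α + 1/2)
      + C₀ ^ ((1:ℝ)/4) / (1 - (2/3 : ℝ) ^ (α - 1/2)) * y ^ (α + 1/2)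
      + x ^ α * (C₀ ^ ((1:ℝ)/4) * y ^ ((1:ℝ)/2))
      ≤ C₀ ^ ((1:ℝ)/4) / (1 - (2/3 : ℝ) ^ (α - 1/2)) * (x+y) ^ (α + 1/2) := by
  set C' : ℝ := C₀ ^ ((1:ℝ)/4) with hC'
  have hC'0 : 0 < C' := Real.rpow_pos_of_pos hC₀ _
  set θ : ℝ := (2/3 : ℝ) ^ (α - 1/2) with hθdef
  have hθ0 : 0 < θ := Real.rpow_pos_of_pos (by norm_num) _
  have hθ1 : θ < 1 := Real.rpow_lt_one (by norm_num) (by norm_num) (by linarith)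
  set c : ℝ := C' / (1 - θ) with hcdef
  have hc0 : 0 < c := div_pos hC'0 (by linarith)
  have hs : 0 < x + y := by linarith
  have hsplit : ∀ z : ℝ, 0 < z → z ≤ 2/3 * (x+y) →
      z ^ (α + 1/2) ≤ θ * (x+y) ^ (α - 1/2) * z := by
    intro z hz hz2
    have h1 : z ^ (α + 1/2) = z ^ (α - 1/2) * z := by
      rw [show α + 1/2 = (α - 1/2) + 1 by ring, Real.rpow_add hz, Real.rpow_one]
    rw [h1]
    have h2 : z ^ (α - 1/2) ≤ θ * (x+y) ^ (α - 1/2) := by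
      have h3 := Real.rpow_le_rpow hz.le hz2 (by linarith : (0:ℝ) ≤ α - 1/2)
      rwa [Real.mul_rpow (by norm_num) hs.le] at h3
    exact mul_le_mul_of_nonneg_right h2 hz.le
  have hcross : x ^ α * y ^ ((1:ℝ)/2) ≤ (x+y) ^ (α + 1/2) := by
    have h1 : x ^ α ≤ (x+y) ^ α := Real.rpow_le_rpow hx.le (by linarith) (by linarith)
    have h2 : y ^ ((1:ℝ)/2) ≤ (x+y) ^ ((1:ℝ)/2) :=
      Real.rpow_le_rpow hy.le (by linarith) (by norm_num)
    calc x ^ α * y ^ ((1:ℝ)/2) ≤ (x+y) ^ α * (x+y) ^ ((1:ℝ)/2) :=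
          mul_le_mul h1 h2 (Real.rpow_nonneg hy.le _) (Real.rpow_nonneg hs.le _)
      _ = (x+y) ^ (α + 1/2) := by rw [← Real.rpow_add hs]
  have hpow : (x+y) ^ (α - 1/2) * (x+y) = (x+y) ^ (α + 1/2) := by
    rw [show α + 1/2 = (α - 1/2) + 1 by ring, Real.rpow_add hs, Real.rpow_one]
  have h4 : c * θ + C' = c := by
    have hne : 1 - θ ≠ 0 := by linarith
    rw [hcdef]
    field_simp
    ring
  have hx3 := hsplit x hx hx2
  have hy3 := hsplit y hy hy2
  calc c * x ^ (α + 1/2) + c * y ^ (α + 1/2) + x ^ α * (C' * y ^ ((1:ℝ)/2))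
      ≤ c * (θ * (x+y) ^ (α - 1/2) * x) + c * (θ * (x+y) ^ (α - 1/2) * y)
          + C' * (x+y) ^ (α + 1/2) := by
        have hc1 := mul_le_mul_of_nonneg_left hx3 hc0.le
        have hc2 := mul_le_mul_of_nonneg_left hy3 hc0.le
        have hc3 : x ^ α * (C' * y ^ ((1:ℝ)/2)) ≤ C' * (x+y) ^ (α + 1/2) := by
          calc x ^ α * (C' * y ^ ((1:ℝ)/2)) = C' * (x ^ α * y ^ ((1:ℝ)/2)) := by ring
            _ ≤ C' * (x+y) ^ (α + 1/2) := mul_le_mul_of_nonneg_left hcross hC'0.le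
        linarith
    _ = (c * θ + C') * (x+y) ^ (α + 1/2) := by rw [← hpow]; ring
    _ = c * (x+y) ^ (α + 1/2) := by rw [h4]

lemma keyW (α C₀ : ℝ) (hα : 1/2 < α) (hC₀ : 0 < C₀)
    {Ω : Type} [MeasurableSpace Ω] (μ : Measure Ω) [IsProbabilityMeasure μ]
    (ξm : ℕ → Ω → ℝ) (hmeas : ∀ i, Measurable (ξm i)) (m : ℕ) (hm0 : 0 < m)
    (M : ℕ)
    (hH2 : ∀ p k : ℕ, p < k → k ≤ M →
      (∫⁻ ω, ENNReal.ofReal (|∑ i ∈ Finset.Ioc p k, ξm i ω| ^ 4) ∂μ)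
        ≤ ENNReal.ofReal (C₀ * (((k : ℝ) - p) / m) ^ 2))
    (f : Ω → ℝ → ℝ) (K : ℕ) (A : Set Ω)
    (hA : ∀ ω ∈ A, ∀ i i' : ℕ, i ≤ M → i' ≤ M →
      |f ω ((i:ℝ)/m) - f ω ((i':ℝ)/m)| ≤ K * |((i:ℝ) - i')/m| ^ α) :
    ∀ d u v : ℕ, u ≤ v → v - u = d → v ≤ M →
      ∃ G : Ω → ℝ, Measurable G ∧ (∀ ω, 0 ≤ G ω) ∧
        (∀ ω ∈ A, |∑ i ∈ Finset.Ioc u v,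
            (f ω ((i:ℝ)/m) - f ω (((u+1:ℕ):ℝ)/m)) * ξm i ω| ≤ K * G ω) ∧
        (∫⁻ ω, ENNReal.ofReal (G ω) ∂μ)
          ≤ ENNReal.ofReal (C₀ ^ ((1:ℝ)/4) / (1 - (2/3 : ℝ) ^ (α - 1/2))
              * (((v:ℝ) - u)/m) ^ (α + 1/2)) := by
  intro d
  induction d using Nat.strong_induction_on with
  | _ d ih =>
  intro u v huv hd hvM
  by_cases hd2 : d < 2
  · -- trivial case : at most one summand, which vanishes
    refine ⟨fun _ => 0, measurable_const, fun ω => le_refl 0, ?_, ?_⟩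
    · intro ω hω
      have hv : v = u ∨ v = u + 1 := by omega
      rcases hv with hv | hv
      · subst hv; simp
      · subst hv
        rw [Nat.Ioc_succ_singleton, Finset.sum_singleton]
        simp
    · simp
  · -- main case : split the interval at w
    push_neg at hd2
    set e : ℕ := d / 2 with hedef
    set w : ℕ := u + e with hwdef
    have he1 : 1 ≤ e := by omega
    have hed : e < d := by omega
    have huw : u ≤ w := by omega
    have hwv : w ≤ v := by omega
    have hwv' : w < v := by omega
    have huw' : u < w := by omega
    have hwM : w ≤ M := le_trans hwv hvM
    obtain ⟨G₁, hG₁m, hG₁0, hG₁path, hG₁int⟩ := ih e hed u w huw (by omega) hwM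
    obtain ⟨G₂, hG₂m, hG₂0, hG₂path, hG₂int⟩ := ih (d - e) (by omega) w v hwv (by omega) hvM
    set x : ℝ := ((w:ℝ) - u)/m with hxdef
    set y : ℝ := ((v:ℝ) - w)/m with hydef
    have hmpos : (0:ℝ) < m := by exact_mod_cast hm0
    have hx : 0 < x := by
      apply div_pos _ hmpos
      have : (u:ℝ) < w := by exact_mod_cast huw'
      linarith
    have hy : 0 < y := by
      apply div_pos _ hmpos
      have : (w:ℝ) < v := by exact_mod_cast hwv'
      linarith
    set S : Ω → ℝ := fun ω => ∑ i ∈ Finset.Ioc w v, ξm i ω with hSdef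
    have hSmeas : Measurable S := Finset.measurable_sum _ (fun i _ => hmeas i)
    have hθ1 : (2/3 : ℝ) ^ (α - 1/2) < 1 :=
      Real.rpow_lt_one (by norm_num) (by norm_num) (by linarith)
    have hcnn : 0 ≤ C₀ ^ ((1:ℝ)/4) / (1 - (2/3:ℝ) ^ (α - 1/2)) :=
      div_nonneg (Real.rpow_nonneg hC₀.le _) (by linarith)
    refine ⟨fun ω => G₁ ω + G₂ ω + x ^ α * |S ω|, by fun_prop, ?_, ?_, ?_⟩
    · intro ω
      have h01 := hG₁0 ω;  have h02 := hG₂0 ω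
      have h03 : 0 ≤ x ^ α * |S ω| := mul_nonneg (Real.rpow_nonneg hx.le _) (abs_nonneg _)
      dsimp only
      linarith
    · -- pathwise bound
      intro ω hω
      have hsum : (∑ i ∈ Finset.Ioc u v, (f ω ((i:ℝ)/m) - f ω (((u+1:ℕ):ℝ)/m)) * ξm i ω)
          = (∑ i ∈ Finset.Ioc u w, (f ω ((i:ℝ)/m) - f ω (((u+1:ℕ):ℝ)/m)) * ξm i ω)
            + ((∑ i ∈ Finset.Ioc w v, (f ω ((i:ℝ)/m) - f ω (((w+1:ℕ):ℝ)/m)) * ξm i ω)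
               + (f ω (((w+1:ℕ):ℝ)/m) - f ω (((u+1:ℕ):ℝ)/m)) * S ω) := by
        rw [← Finset.sum_Ioc_consecutive _ huw hwv]
        congr 1
        rw [hSdef, Finset.mul_sum, ← Finset.sum_add_distrib]
        refine Finset.sum_congr rfl fun i hi => ?_
        ring
      have hcoef : |f ω (((w+1:ℕ):ℝ)/m) - f ω (((u+1:ℕ):ℝ)/m)| ≤ (K:ℝ) * x ^ α := by
        have h1 := hA ω hω (w+1) (u+1) (by omega) (by omega)
        have hnn : (0:ℝ) ≤ ((((w+1:ℕ)):ℝ) - ((u+1:ℕ):ℝ))/m := by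
          apply div_nonneg _ hmpos.le
          push_cast
          have : (u:ℝ) ≤ w := by exact_mod_cast huw
          linarith
        have h2 : |((((w+1:ℕ)):ℝ) - ((u+1:ℕ):ℝ))/m| = x := by
          rw [abs_of_nonneg hnn, hxdef]
          push_cast; ring
        calc |f ω (((w+1:ℕ):ℝ)/m) - f ω (((u+1:ℕ):ℝ)/m)|
            ≤ (K:ℝ) * |(((w+1:ℕ):ℝ) - ((u+1:ℕ):ℝ))/m| ^ α := h1
          _ = (K:ℝ) * x ^ α := by rw [h2]
      calc |∑ i ∈ Finset.Ioc u v, (f ω ((i:ℝ)/m) - f ω (((u+1:ℕ):ℝ)/m)) * ξm i ω|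
          ≤ |∑ i ∈ Finset.Ioc u w, (f ω ((i:ℝ)/m) - f ω (((u+1:ℕ):ℝ)/m)) * ξm i ω|
            + (|∑ i ∈ Finset.Ioc w v, (f ω ((i:ℝ)/m) - f ω (((w+1:ℕ):ℝ)/m)) * ξm i ω|
               + |f ω (((w+1:ℕ):ℝ)/m) - f ω (((u+1:ℕ):ℝ)/m)| * |S ω|) := by
            rw [hsum]
            refine (abs_add_le _ _).trans ?_
            gcongr
            refine (abs_add_le _ _).trans ?_
            rw [abs_mul]
        _ ≤ (K:ℝ) * G₁ ω + ((K:ℝ) * G₂ ω + ((K:ℝ) * x ^ α) * |S ω|) := by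
            have h1 := hG₁path ω hω
            have h2 := hG₂path ω hω
            have h3 := mul_le_mul_of_nonneg_right hcoef (abs_nonneg (S ω))
            linarith
        _ = (K:ℝ) * (G₁ ω + G₂ ω + x ^ α * |S ω|) := by ring
    · -- integral bound
      have hES : (∫⁻ ω, ENNReal.ofReal |S ω| ∂μ)
          ≤ ENNReal.ofReal ((C₀ * (((v:ℝ) - w)/m) ^ 2) ^ ((1:ℝ)/4)) := by
        refine moment14 μ S hSmeas _ (hH2 w v hwv' hvM) ?_
        have hy' : (0:ℝ) < ((v:ℝ) - w)/m := hy
        exact mul_pos hC₀ (pow_pos hy' 2)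
      have hyhalf : (C₀ * (((v:ℝ) - w)/m) ^ 2) ^ ((1:ℝ)/4)
          = C₀ ^ ((1:ℝ)/4) * y ^ ((1:ℝ)/2) := by
        rw [Real.mul_rpow hC₀.le (sq_nonneg _), ← hydef]
        congr 1
        rw [show (y:ℝ)^2 = y ^ ((2:ℕ):ℝ) by rw [Real.rpow_natCast],
          ← Real.rpow_mul hy.le]
        norm_num
      have hsplit : (∫⁻ ω, ENNReal.ofReal (G₁ ω + G₂ ω + x ^ α * |S ω|) ∂μ)
          = (∫⁻ ω, ENNReal.ofReal (G₁ ω) ∂μ) + (∫⁻ ω, ENNReal.ofReal (G₂ ω) ∂μ)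
            + ENNReal.ofReal (x ^ α) * (∫⁻ ω, ENNReal.ofReal (|S ω|) ∂μ) := by
        have hpt : ∀ ω : Ω, ENNReal.ofReal (G₁ ω + G₂ ω + x ^ α * |S ω|)
            = ENNReal.ofReal (G₁ ω) + ENNReal.ofReal (G₂ ω)
              + ENNReal.ofReal (x ^ α) * ENNReal.ofReal (|S ω|) := by
          intro ω
          rw [ENNReal.ofReal_add (add_nonneg (hG₁0 ω) (hG₂0 ω))
              (mul_nonneg (Real.rpow_nonneg hx.le _) (abs_nonneg _)),
            ENNReal.ofReal_add (hG₁0 ω) (hG₂0 ω),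
            ENNReal.ofReal_mul (Real.rpow_nonneg hx.le _)]
        rw [lintegral_congr hpt, lintegral_add_left (by fun_prop),
          lintegral_add_left (by fun_prop), lintegral_const_mul _ (by fun_prop)]
      rw [hsplit]
      have hxy : x + y = ((v:ℝ) - u)/m := by
        rw [hxdef, hydef, ← add_div]; ring_nf
      have hnum : C₀ ^ ((1:ℝ)/4) / (1 - (2/3 : ℝ) ^ (α - 1/2)) * x ^ (α + 1/2)
          + C₀ ^ ((1:ℝ)/4) / (1 - (2/3 : ℝ) ^ (α - 1/2)) * y ^ (α + 1/2)
          + x ^ α * (C₀ ^ ((1:ℝ)/4) * y ^ ((1:ℝ)/2))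
          ≤ C₀ ^ ((1:ℝ)/4) / (1 - (2/3 : ℝ) ^ (α - 1/2)) * (x+y) ^ (α + 1/2) := by
        have hvu : (v:ℝ) - u = d := by
          have hv' : v = u + d := by omega
          rw [hv']; push_cast; ring
        have hwu : (w:ℝ) - u = e := by rw [hwdef]; push_cast; ring
        have hvw : (v:ℝ) - w = (d:ℝ) - e := by
          have hv' : v = u + d := by omega
          rw [hv', hwdef]; push_cast; ring
        have hs' : x + y = (d:ℝ)/m := by rw [hxy, hvu]
        refine numeric α C₀ hα hC₀ x y hx hy ?_ ?_
        · have h1 : (3:ℝ) * e ≤ 2 * d := by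
            have : 3 * e ≤ 2 * d := by omega
            exact_mod_cast this
          have hx' : x = (e:ℝ)/m := by rw [hxdef, hwu]
          rw [hs', hx', show (2:ℝ)/3 * ((d:ℝ)/m) = (2/3*(d:ℝ))/m by ring]
          gcongr
          linarith
        · have h1 : (3:ℝ) * ((d:ℝ) - e) ≤ 2 * d := by
            have h0 : 3 * (d - e) ≤ 2 * d := by omega
            have h2 : ((d - e : ℕ):ℝ) = (d:ℝ) - e := by
              have he' : e ≤ d := by omega
              push_cast [he']; ring
            calc (3:ℝ) * ((d:ℝ) - e) = 3 * ((d-e:ℕ):ℝ) := by rw [h2]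
              _ ≤ 2 * d := by exact_mod_cast h0
          have hy2 : y = ((d:ℝ) - e)/m := by rw [hydef, hvw]
          rw [hs', hy2, show (2:ℝ)/3 * ((d:ℝ)/m) = (2/3*(d:ℝ))/m by ring]
          gcongr
          linarith
      calc (∫⁻ ω, ENNReal.ofReal (G₁ ω) ∂μ) + (∫⁻ ω, ENNReal.ofReal (G₂ ω) ∂μ)
            + ENNReal.ofReal (x ^ α) * (∫⁻ ω, ENNReal.ofReal (|S ω|) ∂μ)
          ≤ ENNReal.ofReal (C₀ ^ ((1:ℝ)/4) / (1 - (2/3 : ℝ) ^ (α - 1/2)) * x ^ (α + 1/2))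
            + ENNReal.ofReal (C₀ ^ ((1:ℝ)/4) / (1 - (2/3 : ℝ) ^ (α - 1/2)) * y ^ (α + 1/2))
            + ENNReal.ofReal (x ^ α) * ENNReal.ofReal (C₀ ^ ((1:ℝ)/4) * y ^ ((1:ℝ)/2)) := by
            refine add_le_add (add_le_add hG₁int hG₂int) ?_
            refine mul_le_mul_right (hES.trans (le_of_eq ?_)) _
            rw [hyhalf]
        _ = ENNReal.ofReal (C₀ ^ ((1:ℝ)/4) / (1 - (2/3 : ℝ) ^ (α - 1/2)) * x ^ (α + 1/2)
              + C₀ ^ ((1:ℝ)/4) / (1 - (2/3 : ℝ) ^ (α - 1/2)) * y ^ (α + 1/2)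
              + x ^ α * (C₀ ^ ((1:ℝ)/4) * y ^ ((1:ℝ)/2))) := by
            rw [← ENNReal.ofReal_mul (Real.rpow_nonneg hx.le _),
              ← ENNReal.ofReal_add (mul_nonneg hcnn (Real.rpow_nonneg hx.le _))
                (mul_nonneg hcnn (Real.rpow_nonneg hy.le _)),
              ← ENNReal.ofReal_add
                (add_nonneg (mul_nonneg hcnn (Real.rpow_nonneg hx.le _))
                  (mul_nonneg hcnn (Real.rpow_nonneg hy.le _)))
                (mul_nonneg (Real.rpow_nonneg hx.le _)
                  (mul_nonneg (Real.rpow_nonneg hC₀.le _) (Real.rpow_nonneg hy.le _)))]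
        _ ≤ ENNReal.ofReal (C₀ ^ ((1:ℝ)/4) / (1 - (2/3 : ℝ) ^ (α - 1/2))
              * (((v:ℝ) - u)/m) ^ (α + 1/2)) := by
            rw [← hxy]
            exact ENNReal.ofReal_le_ofReal hnum

lemma interval_eq (T : ℝ) (n m j : ℕ) (hn : 1 ≤ n) (hm : 1 ≤ m) (hj : 1 ≤ j) :
    (Finset.Icc 1 ⌊(m:ℝ)*T⌋₊).filter
      (fun i : ℕ => ((j:ℝ) - 1)/n ≤ (i:ℝ)/m ∧ (i:ℝ)/m < (j:ℝ)/n)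
    = Finset.Ioc (max 1 ⌈(((j:ℝ)-1)/n)*m⌉₊ - 1)
        (min ⌊(m:ℝ)*T⌋₊ (⌈((j:ℝ)/n)*m⌉₊ - 1)) := by
  have hm0 : (0:ℝ) < m := by exact_mod_cast hm
  have hn0 : (0:ℝ) < n := by exact_mod_cast hn
  have hj0 : (0:ℝ) < j := by exact_mod_cast hj
  have hcu1 : 1 ≤ ⌈((j:ℝ)/n)*m⌉₊ := by
    rw [Nat.one_le_ceil_iff]
    positivity
  ext i
  simp only [Finset.mem_filter, Finset.mem_Icc, Finset.mem_Ioc]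
  constructor
  · rintro ⟨⟨h1, hM⟩, hlow, hup⟩
    have hcl : ⌈(((j:ℝ)-1)/n)*m⌉₊ ≤ i := by
      rw [Nat.ceil_le]
      rw [le_div_iff₀ hm0] at hlow
      exact hlow
    have hcu : i < ⌈((j:ℝ)/n)*m⌉₊ := by
      rw [Nat.lt_ceil]
      rw [div_lt_iff₀ hm0] at hup
      exact hup
    exact ⟨by omega, by omega⟩
  · rintro ⟨hlo, hhi⟩
    have h1 : 1 ≤ i := by omega
    have hcl : ⌈(((j:ℝ)-1)/n)*m⌉₊ ≤ i := by omega
    have hcu : i < ⌈((j:ℝ)/n)*m⌉₊ := by omega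
    have hM : i ≤ ⌊(m:ℝ)*T⌋₊ := by omega
    refine ⟨⟨h1, hM⟩, ?_, ?_⟩
    · rw [le_div_iff₀ hm0]
      exact Nat.ceil_le.mp hcl
    · rw [div_lt_iff₀ hm0]
      exact Nat.lt_ceil.mp hcu

set_option maxHeartbeats 1000000 in
lemma mainBound (T α : ℝ) (hT : 0 < T) (hα : 1 / 2 < α) (hα1 : α ≤ 1)
    {Ω : Type} [MeasurableSpace Ω] (μ : Measure Ω) [IsProbabilityMeasure μ]
    (ξ : ℕ → ℕ → Ω → ℝ) (hmeas : ∀ m i : ℕ, Measurable (ξ m i))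
    (C₀ : ℝ) (hC₀ : 0 < C₀)
    (hH2 : ∀ m : ℕ, 1 ≤ m → ∀ j k : ℕ, j < k → k ≤ ⌊(m : ℝ) * T⌋₊ →
      (∫⁻ ω, ENNReal.ofReal (|∑ i ∈ Finset.Icc (j + 1) k, ξ m i ω| ^ 4) ∂μ)
        ≤ ENNReal.ofReal (C₀ * (((k : ℝ) - (j : ℝ)) / m) ^ 2))
    (f : Ω → ℝ → ℝ) (hfmeas : ∀ t : ℝ, Measurable fun ω => f ω t)
    (ε : ℝ) (hε : 0 < ε) (K n m : ℕ) (hn : 1 ≤ n) (hnm : n ≤ m) :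
    μ {ω : Ω | ε < ⨆ t : Set.Icc (0 : ℝ) T,
        |∑ j ∈ Finset.Icc 1 ⌊(n : ℝ) * (t : ℝ)⌋₊,
          ∑ i ∈ (Finset.Icc 1 ⌊(m : ℝ) * T⌋₊).filter
              (fun i : ℕ => ((j : ℝ) - 1) / n ≤ (i : ℝ) / m ∧ (i : ℝ) / m < (j : ℝ) / n),
            (f ω ((i : ℝ) / m) - f ω (((j : ℝ) - 1) / n)) * ξ m i ω|}
      ≤ μ ({ω : Ω | ∀ q r : ℚ, (q:ℝ) ∈ Set.Icc (0:ℝ) T → (r:ℝ) ∈ Set.Icc (0:ℝ) T →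
            |f ω q - f ω r| ≤ (K:ℝ) * |(q:ℝ) - (r:ℝ)| ^ α}ᶜ)
        + ENNReal.ofReal ((K:ℝ) * (T * (C₀ ^ ((1:ℝ)/4) / (1 - (2/3:ℝ) ^ (α - 1/2)) * 2 ^ (α + 1/2)
            + C₀ ^ ((1:ℝ)/4) * 2 ^ ((1:ℝ)/2)) * (n:ℝ) ^ ((1:ℝ)/2 - α)) / ε) := by
  have hm1 : 1 ≤ m := le_trans hn hnm
  have hm0 : (0:ℝ) < m := by exact_mod_cast hm1
  have hn0 : (0:ℝ) < n := by exact_mod_cast hn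
  have hθ1 : (2/3:ℝ) ^ (α - 1/2) < 1 :=
    Real.rpow_lt_one (by norm_num) (by norm_num) (by linarith)
  set c : ℝ := C₀ ^ ((1:ℝ)/4) / (1 - (2/3:ℝ) ^ (α - 1/2)) with hcdef
  have hc0 : 0 < c := div_pos (Real.rpow_pos_of_pos hC₀ _) (by linarith)
  set A : Set Ω := {ω | ∀ q r : ℚ, (q:ℝ) ∈ Set.Icc (0:ℝ) T → (r:ℝ) ∈ Set.Icc (0:ℝ) T →
    |f ω q - f ω r| ≤ (K:ℝ) * |(q:ℝ) - (r:ℝ)| ^ α} with hAdef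
  set D : ℝ := c * ((2:ℝ)/n) ^ (α + 1/2)
    + (1/(n:ℝ)) ^ α * (C₀ ^ ((1:ℝ)/4) * ((2:ℝ)/n) ^ ((1:ℝ)/2)) with hDdef
  have hD0 : (0:ℝ) ≤ D := by
    rw [hDdef]
    have h1 : (0:ℝ) ≤ ((2:ℝ)/n) ^ (α + 1/2) := Real.rpow_nonneg (by positivity) _
    have h2 : (0:ℝ) ≤ (1/(n:ℝ)) ^ α := Real.rpow_nonneg (by positivity) _
    have h3 : (0:ℝ) ≤ ((2:ℝ)/n) ^ ((1:ℝ)/2) := Real.rpow_nonneg (by positivity) _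
    have h4 : (0:ℝ) ≤ C₀ ^ ((1:ℝ)/4) := Real.rpow_nonneg hC₀.le _
    have h5 : (0:ℝ) ≤ c * ((2:ℝ)/n) ^ (α + 1/2) := mul_nonneg hc0.le h1
    have h6 : (0:ℝ) ≤ (1/(n:ℝ)) ^ α * (C₀ ^ ((1:ℝ)/4) * ((2:ℝ)/n) ^ ((1:ℝ)/2)) :=
      mul_nonneg h2 (mul_nonneg h4 h3)
    linarith
  have hH2' : ∀ p k : ℕ, p < k → k ≤ ⌊(m:ℝ)*T⌋₊ →
      (∫⁻ ω, ENNReal.ofReal (|∑ i ∈ Finset.Ioc p k, ξ m i ω| ^ 4) ∂μ)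
        ≤ ENNReal.ofReal (C₀ * (((k:ℝ) - p)/m) ^ 2) := by
    intro p k hpk hkM
    rw [← Finset.Icc_add_one_left_eq_Ioc]
    exact hH2 m hm1 p k hpk hkM
  have hgrid_mem : ∀ i : ℕ, i ≤ ⌊(m:ℝ)*T⌋₊ → ((i:ℝ)/m) ∈ Set.Icc (0:ℝ) T := by
    intro i hi
    constructor
    · positivity
    · rw [div_le_iff₀ hm0]
      have h1 : (i:ℝ) ≤ (⌊(m:ℝ)*T⌋₊:ℝ) := by exact_mod_cast hi
      have h2 : (⌊(m:ℝ)*T⌋₊:ℝ) ≤ (m:ℝ)*T := Nat.floor_le (by positivity)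
      nlinarith
  have hAgrid : ∀ ω ∈ A, ∀ i i' : ℕ, i ≤ ⌊(m:ℝ)*T⌋₊ → i' ≤ ⌊(m:ℝ)*T⌋₊ →
      |f ω ((i:ℝ)/m) - f ω ((i':ℝ)/m)| ≤ (K:ℝ) * |((i:ℝ) - i')/m| ^ α := by
    intro ω hω i i' hi hi'
    have e1 : (((i:ℚ)/(m:ℚ) : ℚ) : ℝ) = (i:ℝ)/m := by push_cast; ring
    have e2 : (((i':ℚ)/(m:ℚ) : ℚ) : ℝ) = (i':ℝ)/m := by push_cast; ring
    have key := hω ((i:ℚ)/(m:ℚ)) ((i':ℚ)/(m:ℚ))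
      (by rw [e1]; exact hgrid_mem i hi) (by rw [e2]; exact hgrid_mem i' hi')
    rw [e1, e2, div_sub_div_same] at key
    exact key
  -- per block construction
  have perj : ∀ j : ℕ, ∃ Gj : Ω → ℝ, Measurable Gj ∧ (∀ ω, 0 ≤ Gj ω) ∧
      ((1 ≤ j ∧ j ≤ ⌊(n:ℝ)*T⌋₊) → ((∀ ω ∈ A,
          |∑ i ∈ (Finset.Icc 1 ⌊(m:ℝ)*T⌋₊).filter
              (fun i : ℕ => ((j:ℝ)-1)/n ≤ (i:ℝ)/m ∧ (i:ℝ)/m < (j:ℝ)/n),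
            (f ω ((i:ℝ)/m) - f ω (((j:ℝ)-1)/n)) * ξ m i ω| ≤ (K:ℝ) * Gj ω)
        ∧ (∫⁻ ω, ENNReal.ofReal (Gj ω) ∂μ) ≤ ENNReal.ofReal D)) := by
    intro j
    by_cases hj : 1 ≤ j ∧ j ≤ ⌊(n:ℝ)*T⌋₊
    swap
    · exact ⟨fun _ => 0, measurable_const, fun _ => le_refl 0, fun h => absurd h hj⟩
    obtain ⟨hj1, hjN⟩ := hj
    have hj0 : (0:ℝ) < j := by exact_mod_cast hj1
    have hIoc := interval_eq T n m j hn hm1 hj1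
    set p : ℕ := max 1 ⌈(((j:ℝ)-1)/n)*m⌉₊ - 1 with hpdef
    set q : ℕ := min ⌊(m:ℝ)*T⌋₊ (⌈((j:ℝ)/n)*m⌉₊ - 1) with hqdef
    by_cases hpq : p < q
    swap
    · refine ⟨fun _ => 0, measurable_const, fun _ => le_refl 0, fun _ => ⟨?_, by simp⟩⟩
      intro ω hω
      rw [hIoc, Finset.Ioc_eq_empty hpq]
      simp
    have hqM : q ≤ ⌊(m:ℝ)*T⌋₊ := min_le_left _ _
    have hpq' : (p:ℝ) < q := by exact_mod_cast hpq
    -- length of block bound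
    have hcu1 : 1 ≤ ⌈((j:ℝ)/n)*m⌉₊ := by
      rw [Nat.one_le_ceil_iff]; positivity
    have hq_up : (q:ℝ) ≤ ((j:ℝ)/n)*m := by
      have h1 : q ≤ ⌈((j:ℝ)/n)*m⌉₊ - 1 := min_le_right _ _
      have h2 : (q:ℝ) ≤ (⌈((j:ℝ)/n)*m⌉₊:ℝ) - 1 := by
        have h2' : ((⌈((j:ℝ)/n)*m⌉₊ - 1 : ℕ) : ℝ) = (⌈((j:ℝ)/n)*m⌉₊:ℝ) - 1 := by
          rw [Nat.cast_sub hcu1]; simp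
        have h2'' : (q:ℝ) ≤ ((⌈((j:ℝ)/n)*m⌉₊ - 1 : ℕ) : ℝ) := by exact_mod_cast h1
        rw [h2'] at h2''; exact h2''
      have h3 : (⌈((j:ℝ)/n)*m⌉₊:ℝ) < ((j:ℝ)/n)*m + 1 := Nat.ceil_lt_add_one (by positivity)
      linarith
    have hp_lo : (((j:ℝ)-1)/n)*m - 1 ≤ (p:ℝ) := by
      have h2 : (p:ℝ) = ((max 1 ⌈(((j:ℝ)-1)/n)*m⌉₊ : ℕ):ℝ) - 1 := by
        rw [hpdef, Nat.cast_sub (le_max_left _ _)]; simp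
      have h3 : (((j:ℝ)-1)/n)*m ≤ (⌈(((j:ℝ)-1)/n)*m⌉₊:ℝ) := Nat.le_ceil _
      have h4 : (⌈(((j:ℝ)-1)/n)*m⌉₊:ℝ) ≤ ((max 1 ⌈(((j:ℝ)-1)/n)*m⌉₊ : ℕ):ℝ) := by
        exact_mod_cast le_max_right 1 ⌈(((j:ℝ)-1)/n)*m⌉₊
      linarith
    have hmn : (1:ℝ) ≤ (m:ℝ)/n := by
      rw [le_div_iff₀ hn0, one_mul]; exact_mod_cast hnm
    have hqp2 : (q:ℝ) - p ≤ 2*((m:ℝ)/n) := by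
      have h5 : ((j:ℝ)/n)*m - (((j:ℝ)-1)/n)*m = (m:ℝ)/n := by ring
      linarith
    have hqp1 : ((q:ℝ) - p)/m ≤ 2/(n:ℝ) := by
      have h7 : (2*((m:ℝ)/n))/m = 2/(n:ℝ) := by field_simp
      rw [← h7]
      exact div_le_div_of_nonneg_right hqp2 hm0.le
    have hqp0 : (0:ℝ) < ((q:ℝ) - p)/m := by
      apply div_pos _ hm0; linarith
    have hp1M : p + 1 ≤ ⌊(m:ℝ)*T⌋₊ := by omega
    clear_value p q
    clear hq_up hp_lo hqp2 hcu1 hpdef hqdef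
    obtain ⟨G1, hG1m, hG10, hG1path, hG1int⟩ :=
      keyW α C₀ hα hC₀ μ (ξ m) (hmeas m) m (by omega) ⌊(m:ℝ)*T⌋₊ hH2' f K A hAgrid
        (q - p) p q hpq.le rfl hqM
    set Sb : Ω → ℝ := fun ω => ∑ i ∈ Finset.Ioc p q, ξ m i ω with hSbdef
    have hSbm : Measurable Sb := Finset.measurable_sum _ (fun i _ => hmeas m i)
    refine ⟨fun ω => G1 ω + (1/(n:ℝ))^α * |Sb ω|, by fun_prop, ?_, fun _ => ⟨?_, ?_⟩⟩
    · intro ω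
      have h01 := hG10 ω
      have h02 : (0:ℝ) ≤ (1/(n:ℝ))^α * |Sb ω| :=
        mul_nonneg (Real.rpow_nonneg (by positivity) _) (abs_nonneg _)
      dsimp only
      linarith
    · -- pathwise bound
      intro ω hω
      rw [hIoc]
      have hsplit : ∑ i ∈ Finset.Ioc p q, (f ω ((i:ℝ)/m) - f ω (((j:ℝ)-1)/n)) * ξ m i ω
          = (∑ i ∈ Finset.Ioc p q, (f ω ((i:ℝ)/m) - f ω (((p+1:ℕ):ℝ)/m)) * ξ m i ω)
            + (f ω (((p+1:ℕ):ℝ)/m) - f ω (((j:ℝ)-1)/n)) * Sb ω := by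
        rw [hSbdef, Finset.mul_sum, ← Finset.sum_add_distrib]
        exact Finset.sum_congr rfl fun i hi => by ring
      have hp1mem : (p+1) ∈ (Finset.Icc 1 ⌊(m:ℝ)*T⌋₊).filter
          (fun i : ℕ => ((j:ℝ)-1)/n ≤ (i:ℝ)/m ∧ (i:ℝ)/m < (j:ℝ)/n) := by
        rw [hIoc]
        exact Finset.mem_Ioc.mpr ⟨by omega, by omega⟩
      obtain ⟨-, hp1a, hp1b⟩ := Finset.mem_filter.mp hp1mem
      have hcoef : |f ω (((p+1:ℕ):ℝ)/m) - f ω (((j:ℝ)-1)/n)| ≤ (K:ℝ) * ((1:ℝ)/n) ^ α := by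
        have e1 : ((((p+1:ℕ):ℚ)/(m:ℚ) : ℚ) : ℝ) = ((p+1:ℕ):ℝ)/m := by push_cast; ring
        have e2 : ((((j:ℚ)-1)/(n:ℚ) : ℚ) : ℝ) = ((j:ℝ)-1)/n := by push_cast; ring
        have hmem2 : (((j:ℝ)-1)/n) ∈ Set.Icc (0:ℝ) T := by
          constructor
          · apply div_nonneg _ hn0.le
            have : (1:ℝ) ≤ j := by exact_mod_cast hj1
            linarith
          · rw [div_le_iff₀ hn0]
            have h1 : (j:ℝ) ≤ (⌊(n:ℝ)*T⌋₊:ℝ) := by exact_mod_cast hjN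
            have h2 : (⌊(n:ℝ)*T⌋₊:ℝ) ≤ (n:ℝ)*T := Nat.floor_le (by positivity)
            nlinarith
        have key := hω (((p+1:ℕ):ℚ)/(m:ℚ)) (((j:ℚ)-1)/(n:ℚ))
          (by rw [e1]; exact hgrid_mem (p+1) hp1M) (by rw [e2]; exact hmem2)
        rw [e1, e2] at key
        have hdist : |((p+1:ℕ):ℝ)/m - ((j:ℝ)-1)/n| ≤ (1:ℝ)/n := by
          rw [abs_of_nonneg (by linarith)]
          have h8 : (j:ℝ)/n - ((j:ℝ)-1)/n = 1/n := by ring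
          linarith
        calc |f ω (((p+1:ℕ):ℝ)/m) - f ω (((j:ℝ)-1)/n)|
            ≤ (K:ℝ) * |((p+1:ℕ):ℝ)/m - ((j:ℝ)-1)/n| ^ α := key
          _ ≤ (K:ℝ) * ((1:ℝ)/n) ^ α := by
              apply mul_le_mul_of_nonneg_left _ (Nat.cast_nonneg K)
              exact Real.rpow_le_rpow (abs_nonneg _) hdist (by linarith)
      calc |∑ i ∈ Finset.Ioc p q, (f ω ((i:ℝ)/m) - f ω (((j:ℝ)-1)/n)) * ξ m i ω|
          ≤ |∑ i ∈ Finset.Ioc p q, (f ω ((i:ℝ)/m) - f ω (((p+1:ℕ):ℝ)/m)) * ξ m i ω|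
            + |f ω (((p+1:ℕ):ℝ)/m) - f ω (((j:ℝ)-1)/n)| * |Sb ω| := by
            rw [hsplit]
            refine (abs_add_le _ _).trans ?_
            rw [abs_mul]
        _ ≤ (K:ℝ) * G1 ω + ((K:ℝ) * ((1:ℝ)/n) ^ α) * |Sb ω| := by
            have h1 := hG1path ω hω
            have h2 := mul_le_mul_of_nonneg_right hcoef (abs_nonneg (Sb ω))
            linarith
        _ = (K:ℝ) * (G1 ω + (1/(n:ℝ))^α * |Sb ω|) := by ring
    · -- integral bound
      have hSbint : (∫⁻ ω, ENNReal.ofReal |Sb ω| ∂μ)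
          ≤ ENNReal.ofReal ((C₀ * ((2:ℝ)/n) ^ 2) ^ ((1:ℝ)/4)) := by
        refine moment14 μ Sb hSbm (C₀ * ((2:ℝ)/n) ^ 2) ?_ (by positivity)
        refine (hH2' p q hpq hqM).trans (ENNReal.ofReal_le_ofReal ?_)
        have := pow_le_pow_left₀ hqp0.le hqp1 2
        nlinarith
      have hyhalf : (C₀ * ((2:ℝ)/n) ^ 2) ^ ((1:ℝ)/4)
          = C₀ ^ ((1:ℝ)/4) * ((2:ℝ)/n) ^ ((1:ℝ)/2) := by
        rw [Real.mul_rpow hC₀.le (sq_nonneg _)]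
        congr 1
        rw [show ((2:ℝ)/n)^2 = ((2:ℝ)/n) ^ ((2:ℕ):ℝ) by rw [Real.rpow_natCast],
          ← Real.rpow_mul (by positivity)]
        norm_num
      have hG1int' : (∫⁻ ω, ENNReal.ofReal (G1 ω) ∂μ)
          ≤ ENNReal.ofReal (c * ((2:ℝ)/n) ^ (α + 1/2)) := by
        refine hG1int.trans (ENNReal.ofReal_le_ofReal ?_)
        apply mul_le_mul_of_nonneg_left _ hc0.le
        exact Real.rpow_le_rpow hqp0.le hqp1 (by linarith)
      have hptw : ∀ ω : Ω, ENNReal.ofReal (G1 ω + (1/(n:ℝ))^α * |Sb ω|)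
          = ENNReal.ofReal (G1 ω) + ENNReal.ofReal ((1/(n:ℝ))^α) * ENNReal.ofReal (|Sb ω|) := by
        intro ω
        rw [ENNReal.ofReal_add (hG10 ω)
          (mul_nonneg (Real.rpow_nonneg (by positivity) _) (abs_nonneg _)),
          ENNReal.ofReal_mul (Real.rpow_nonneg (by positivity) _)]
      calc (∫⁻ ω, ENNReal.ofReal (G1 ω + (1/(n:ℝ))^α * |Sb ω|) ∂μ)
          = (∫⁻ ω, ENNReal.ofReal (G1 ω) ∂μ)
            + ENNReal.ofReal ((1/(n:ℝ))^α) * (∫⁻ ω, ENNReal.ofReal (|Sb ω|) ∂μ) := by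
            rw [lintegral_congr hptw, lintegral_add_left (by fun_prop),
              lintegral_const_mul _ (by fun_prop)]
        _ ≤ ENNReal.ofReal (c * ((2:ℝ)/n) ^ (α + 1/2))
            + ENNReal.ofReal ((1/(n:ℝ))^α)
              * ENNReal.ofReal (C₀ ^ ((1:ℝ)/4) * ((2:ℝ)/n) ^ ((1:ℝ)/2)) := by
            refine add_le_add hG1int' (mul_le_mul_right (hSbint.trans (le_of_eq ?_)) _)
            rw [hyhalf]
        _ = ENNReal.ofReal D := by
            rw [← ENNReal.ofReal_mul (Real.rpow_nonneg (by positivity) _),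
              ← ENNReal.ofReal_add (mul_nonneg hc0.le (Real.rpow_nonneg (by positivity) _))
                (mul_nonneg (Real.rpow_nonneg (by positivity) _)
                  (mul_nonneg (Real.rpow_nonneg hC₀.le _) (Real.rpow_nonneg (by positivity) _))),
              hDdef]
  -- choose the per block functions and sum them
  choose Gf hGm hG0 hGprop using perj
  set Gtot : Ω → ℝ := fun ω => ∑ j ∈ Finset.Icc 1 ⌊(n:ℝ)*T⌋₊, Gf j ω with hGtotdef
  have hGtm : Measurable Gtot := Finset.measurable_sum _ (fun j _ => hGm j)
  have hGt0 : ∀ ω, 0 ≤ Gtot ω := fun ω => Finset.sum_nonneg fun j _ => hG0 j ω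
  have hpath : ∀ ω ∈ A, (⨆ t : Set.Icc (0 : ℝ) T,
      |∑ j ∈ Finset.Icc 1 ⌊(n : ℝ) * (t : ℝ)⌋₊,
          ∑ i ∈ (Finset.Icc 1 ⌊(m : ℝ) * T⌋₊).filter
              (fun i : ℕ => ((j : ℝ) - 1) / n ≤ (i : ℝ) / m ∧ (i : ℝ) / m < (j : ℝ) / n),
            (f ω ((i : ℝ) / m) - f ω (((j : ℝ) - 1) / n)) * ξ m i ω|)
      ≤ (K:ℝ) * Gtot ω := by
    intro ω hω
    refine Real.iSup_le (fun t => ?_) (mul_nonneg (Nat.cast_nonneg K) (hGt0 ω))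
    have hfloor : ⌊(n:ℝ)*(t:ℝ)⌋₊ ≤ ⌊(n:ℝ)*T⌋₊ := by
      apply Nat.floor_le_floor
      have h1 := t.2.2
      have h2 := t.2.1
      nlinarith
    have hsub : Finset.Icc 1 ⌊(n:ℝ)*(t:ℝ)⌋₊ ⊆ Finset.Icc 1 ⌊(n:ℝ)*T⌋₊ :=
      Finset.Icc_subset_Icc le_rfl hfloor
    calc |∑ j ∈ Finset.Icc 1 ⌊(n : ℝ) * (t : ℝ)⌋₊,
          ∑ i ∈ (Finset.Icc 1 ⌊(m : ℝ) * T⌋₊).filter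
              (fun i : ℕ => ((j : ℝ) - 1) / n ≤ (i : ℝ) / m ∧ (i : ℝ) / m < (j : ℝ) / n),
            (f ω ((i : ℝ) / m) - f ω (((j : ℝ) - 1) / n)) * ξ m i ω|
        ≤ ∑ j ∈ Finset.Icc 1 ⌊(n : ℝ) * (t : ℝ)⌋₊,
            |∑ i ∈ (Finset.Icc 1 ⌊(m : ℝ) * T⌋₊).filter
              (fun i : ℕ => ((j : ℝ) - 1) / n ≤ (i : ℝ) / m ∧ (i : ℝ) / m < (j : ℝ) / n),
            (f ω ((i : ℝ) / m) - f ω (((j : ℝ) - 1) / n)) * ξ m i ω| :=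
          Finset.abs_sum_le_sum_abs _ _
      _ ≤ ∑ j ∈ Finset.Icc 1 ⌊(n : ℝ) * (t : ℝ)⌋₊, (K:ℝ) * Gf j ω := by
          refine Finset.sum_le_sum fun j hj => ?_
          obtain ⟨hj1, hj2⟩ := Finset.mem_Icc.mp hj
          exact ((hGprop j ⟨hj1, le_trans hj2 hfloor⟩).1) ω hω
      _ ≤ ∑ j ∈ Finset.Icc 1 ⌊(n:ℝ)*T⌋₊, (K:ℝ) * Gf j ω := by
          refine Finset.sum_le_sum_of_subset_of_nonneg hsub fun j _ _ => ?_
          exact mul_nonneg (Nat.cast_nonneg K) (hG0 j ω)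
      _ = (K:ℝ) * Gtot ω := by rw [hGtotdef, Finset.mul_sum]
  have hint : (∫⁻ ω, ENNReal.ofReal (Gtot ω) ∂μ)
      ≤ ENNReal.ofReal ((⌊(n:ℝ)*T⌋₊:ℝ) * D) := by
    calc (∫⁻ ω, ENNReal.ofReal (Gtot ω) ∂μ)
        = ∑ j ∈ Finset.Icc 1 ⌊(n:ℝ)*T⌋₊, ∫⁻ ω, ENNReal.ofReal (Gf j ω) ∂μ := by
          rw [← lintegral_finset_sum _ (fun j _ => (hGm j).ennreal_ofReal)]
          refine lintegral_congr fun ω => ?_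
          rw [hGtotdef]
          exact ENNReal.ofReal_sum_of_nonneg (fun j _ => hG0 j ω)
      _ ≤ ∑ j ∈ Finset.Icc 1 ⌊(n:ℝ)*T⌋₊, ENNReal.ofReal D := by
          refine Finset.sum_le_sum fun j hj => ?_
          obtain ⟨hj1, hj2⟩ := Finset.mem_Icc.mp hj
          exact (hGprop j ⟨hj1, hj2⟩).2
      _ = (⌊(n:ℝ)*T⌋₊ : ℝ≥0∞) * ENNReal.ofReal D := by
          rw [Finset.sum_const, Nat.card_Icc, nsmul_eq_mul, Nat.add_sub_cancel]
      _ = ENNReal.ofReal ((⌊(n:ℝ)*T⌋₊:ℝ) * D) := by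
          rw [ENNReal.ofReal_mul (Nat.cast_nonneg _), ENNReal.ofReal_natCast]
  -- real arithmetic : N * D ≤ c₅ * n^(1/2-α)
  have hDb : (⌊(n:ℝ)*T⌋₊:ℝ) * D
      ≤ T * (c * 2 ^ (α + 1/2) + C₀ ^ ((1:ℝ)/4) * 2 ^ ((1:ℝ)/2)) * (n:ℝ) ^ ((1:ℝ)/2 - α) := by
    have hN : (⌊(n:ℝ)*T⌋₊:ℝ) ≤ (n:ℝ)*T := Nat.floor_le (by positivity)
    have e1 : ((2:ℝ)/n) ^ (α + 1/2) = 2 ^ (α+1/2) * (n:ℝ) ^ (-(α+1/2)) := by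
      rw [Real.div_rpow (by norm_num) hn0.le, Real.rpow_neg hn0.le, div_eq_mul_inv]
    have e2 : ((1:ℝ)/(n:ℝ)) ^ α = (n:ℝ) ^ (-α) := by
      rw [Real.div_rpow (by norm_num) hn0.le, Real.one_rpow, Real.rpow_neg hn0.le,
        one_div]
    have e3 : ((2:ℝ)/n) ^ ((1:ℝ)/2) = 2 ^ ((1:ℝ)/2) * (n:ℝ) ^ (-((1:ℝ)/2)) := by
      rw [Real.div_rpow (by norm_num) hn0.le, Real.rpow_neg hn0.le, div_eq_mul_inv]
    have e4 : (n:ℝ) * (n:ℝ)^(-(α+1/2)) = (n:ℝ)^((1:ℝ)/2 - α) := by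
      rw [show ((1:ℝ)/2 - α) = 1 + (-(α+1/2)) by ring, Real.rpow_add hn0, Real.rpow_one]
    have e5 : (n:ℝ) * ((n:ℝ)^(-α) * (n:ℝ)^(-((1:ℝ)/2))) = (n:ℝ)^((1:ℝ)/2 - α) := by
      rw [show ((1:ℝ)/2 - α) = 1 + (-α + -((1:ℝ)/2)) by ring, Real.rpow_add hn0,
        Real.rpow_add hn0, Real.rpow_one]
    have heq : ((n:ℝ)*T) * D
        = T * (c * 2 ^ (α + 1/2) + C₀ ^ ((1:ℝ)/4) * 2 ^ ((1:ℝ)/2)) * (n:ℝ) ^ ((1:ℝ)/2 - α) := by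
      rw [hDdef, e1, e2, e3]
      rw [show ((n:ℝ)*T) * (c * (2 ^ (α+1/2) * (n:ℝ) ^ (-(α+1/2)))
          + (n:ℝ) ^ (-α) * (C₀ ^ ((1:ℝ)/4) * (2 ^ ((1:ℝ)/2) * (n:ℝ) ^ (-((1:ℝ)/2)))))
        = T * (c * 2 ^ (α+1/2) * ((n:ℝ) * (n:ℝ)^(-(α+1/2)))
          + C₀ ^ ((1:ℝ)/4) * 2 ^ ((1:ℝ)/2) * ((n:ℝ) * ((n:ℝ)^(-α) * (n:ℝ)^(-((1:ℝ)/2))))) by ring]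
      rw [e4, e5]
      ring
    calc (⌊(n:ℝ)*T⌋₊:ℝ) * D ≤ ((n:ℝ)*T) * D := mul_le_mul_of_nonneg_right hN hD0
      _ = _ := heq
  -- Markov inequality and conclusion
  set Bd : ℝ := (K:ℝ) * (T * (c * 2 ^ (α + 1/2) + C₀ ^ ((1:ℝ)/4) * 2 ^ ((1:ℝ)/2))
    * (n:ℝ) ^ ((1:ℝ)/2 - α)) with hBddef
  have hsubset : {ω : Ω | ε < ⨆ t : Set.Icc (0 : ℝ) T,
        |∑ j ∈ Finset.Icc 1 ⌊(n : ℝ) * (t : ℝ)⌋₊,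
          ∑ i ∈ (Finset.Icc 1 ⌊(m : ℝ) * T⌋₊).filter
              (fun i : ℕ => ((j : ℝ) - 1) / n ≤ (i : ℝ) / m ∧ (i : ℝ) / m < (j : ℝ) / n),
            (f ω ((i : ℝ) / m) - f ω (((j : ℝ) - 1) / n)) * ξ m i ω|}
      ⊆ Aᶜ ∪ {ω : Ω | ENNReal.ofReal ε ≤ ENNReal.ofReal ((K:ℝ) * Gtot ω)} := by
    intro ω hω
    by_cases hmem : ω ∈ A
    · right
      have h1 := hpath ω hmem
      exact ENNReal.ofReal_le_ofReal (le_of_lt (lt_of_lt_of_le hω h1))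
    · exact Or.inl hmem
  have hmarkov : μ {ω : Ω | ENNReal.ofReal ε ≤ ENNReal.ofReal ((K:ℝ) * Gtot ω)}
      ≤ ENNReal.ofReal (Bd / ε) := by
    have h1 := meas_ge_le_lintegral_div (μ := μ)
      (f := fun ω => ENNReal.ofReal ((K:ℝ) * Gtot ω))
      ((measurable_const.mul hGtm).ennreal_ofReal.aemeasurable)
      (ε := ENNReal.ofReal ε) (ENNReal.ofReal_pos.mpr hε).ne' ENNReal.ofReal_ne_top
    refine h1.trans ?_
    have h2 : (∫⁻ ω, ENNReal.ofReal ((K:ℝ) * Gtot ω) ∂μ) ≤ ENNReal.ofReal Bd := by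
      calc (∫⁻ ω, ENNReal.ofReal ((K:ℝ) * Gtot ω) ∂μ)
          = ENNReal.ofReal (K:ℝ) * (∫⁻ ω, ENNReal.ofReal (Gtot ω) ∂μ) := by
            rw [← lintegral_const_mul _ hGtm.ennreal_ofReal]
            exact lintegral_congr fun ω => ENNReal.ofReal_mul (Nat.cast_nonneg K)
        _ ≤ ENNReal.ofReal (K:ℝ) * ENNReal.ofReal ((⌊(n:ℝ)*T⌋₊:ℝ) * D) :=
            mul_le_mul_right hint _
        _ ≤ ENNReal.ofReal (K:ℝ) * ENNReal.ofReal (T * (c * 2 ^ (α + 1/2)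
              + C₀ ^ ((1:ℝ)/4) * 2 ^ ((1:ℝ)/2)) * (n:ℝ) ^ ((1:ℝ)/2 - α)) :=
            mul_le_mul_right (ENNReal.ofReal_le_ofReal hDb) _
        _ = ENNReal.ofReal Bd := by
            rw [← ENNReal.ofReal_mul (Nat.cast_nonneg K), hBddef]
    rw [ENNReal.ofReal_div_of_pos hε]
    exact ENNReal.div_le_div_right h2 _
  calc μ {ω : Ω | ε < ⨆ t : Set.Icc (0 : ℝ) T,
        |∑ j ∈ Finset.Icc 1 ⌊(n : ℝ) * (t : ℝ)⌋₊,
          ∑ i ∈ (Finset.Icc 1 ⌊(m : ℝ) * T⌋₊).filter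
              (fun i : ℕ => ((j : ℝ) - 1) / n ≤ (i : ℝ) / m ∧ (i : ℝ) / m < (j : ℝ) / n),
            (f ω ((i : ℝ) / m) - f ω (((j : ℝ) - 1) / n)) * ξ m i ω|}
      ≤ μ (Aᶜ ∪ {ω : Ω | ENNReal.ofReal ε ≤ ENNReal.ofReal ((K:ℝ) * Gtot ω)}) :=
        measure_mono hsubset
    _ ≤ μ Aᶜ + μ {ω : Ω | ENNReal.ofReal ε ≤ ENNReal.ofReal ((K:ℝ) * Gtot ω)} :=
        measure_union_le _ _
    _ ≤ μ Aᶜ + ENNReal.ofReal (Bd / ε) := add_le_add_right hmarkov _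


/-- Key convergence (vancov): for `T > 0`, `α ∈ (1/2,1]`, random weights `ξ_{i,m}`
satisfying (H2) and a process `f` with measurable marginals and a.e. α-Hölder paths,
`lim_{n→∞} limsup_{m→∞} P( sup_{t ∈ [0,T]} |R_{n,m}(t)| > ε ) = 0` for every `ε > 0`,
where `R_{n,m}(t) = ∑_{j=1}^{⌊nt⌋} ∑_{i ∈ I_n(j)} (f(·,t_i) - f(·,u_{j-1})) ξ_{i,m}`. -/
theorem stmt_13 (T α : ℝ) (hT : 0 < T) (hα : 1 / 2 < α) (hα1 : α ≤ 1)
    (Ω : Type) (m0 : MeasurableSpace Ω) (μ : Measure Ω) (hμ : IsProbabilityMeasure μ)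
    (ξ : ℕ → ℕ → Ω → ℝ) (hmeas : ∀ m i : ℕ, Measurable (ξ m i))
    (C₀ : ℝ) (hC₀ : 0 < C₀)
    (hH2 : ∀ m : ℕ, 1 ≤ m → ∀ j k : ℕ, j < k → k ≤ ⌊(m : ℝ) * T⌋₊ →
      (∫⁻ ω, ENNReal.ofReal (|∑ i ∈ Finset.Icc (j + 1) k, ξ m i ω| ^ 4) ∂μ)
        ≤ ENNReal.ofReal (C₀ * (((k : ℝ) - (j : ℝ)) / m) ^ 2))
    (f : Ω → ℝ → ℝ) (hfmeas : ∀ t : ℝ, Measurable fun ω => f ω t)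
    (hfHolder : ∀ᵐ ω ∂μ, ∃ H : ℝ, ∀ u ∈ Set.Icc (0 : ℝ) T, ∀ v ∈ Set.Icc (0 : ℝ) T,
      |f ω u - f ω v| ≤ H * |u - v| ^ α) :
    ∀ ε : ℝ, 0 < ε →
      Tendsto (fun n : ℕ =>
        limsup (fun m : ℕ =>
          μ {ω : Ω | ε < ⨆ t : Set.Icc (0 : ℝ) T,
            |∑ j ∈ Finset.Icc 1 ⌊(n : ℝ) * (t : ℝ)⌋₊,
              ∑ i ∈ (Finset.Icc 1 ⌊(m : ℝ) * T⌋₊).filter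
                  (fun i : ℕ => ((j : ℝ) - 1) / n ≤ (i : ℝ) / m ∧ (i : ℝ) / m < (j : ℝ) / n),
                (f ω ((i : ℝ) / m) - f ω (((j : ℝ) - 1) / n)) * ξ m i ω|}) atTop)
        atTop (nhds 0) := by
  intro ε hε
  set c₅ : ℝ := T * (C₀ ^ ((1:ℝ)/4) / (1 - (2/3:ℝ) ^ (α - 1/2)) * 2 ^ (α + 1/2)
      + C₀ ^ ((1:ℝ)/4) * 2 ^ ((1:ℝ)/2)) with hc₅
  set A : ℕ → Set Ω := fun K => {ω | ∀ q r : ℚ, (q:ℝ) ∈ Set.Icc (0:ℝ) T →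
    (r:ℝ) ∈ Set.Icc (0:ℝ) T → |f ω q - f ω r| ≤ (K:ℝ) * |(q:ℝ) - (r:ℝ)| ^ α} with hAdef
  have hAmeas : ∀ K : ℕ, MeasurableSet (A K) := by
    intro K
    have hrw : A K = ⋂ (q : ℚ) (r : ℚ), {ω | (q:ℝ) ∈ Set.Icc (0:ℝ) T →
        (r:ℝ) ∈ Set.Icc (0:ℝ) T → |f ω q - f ω r| ≤ (K:ℝ) * |(q:ℝ) - (r:ℝ)| ^ α} := by
      ext ω
      simp only [hAdef, Set.mem_setOf_eq, Set.mem_iInter]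
    rw [hrw]
    refine MeasurableSet.iInter fun q => MeasurableSet.iInter fun r => ?_
    by_cases hq : (q:ℝ) ∈ Set.Icc (0:ℝ) T
    · by_cases hr : (r:ℝ) ∈ Set.Icc (0:ℝ) T
      · simp only [hq, hr, forall_true_left]
        exact measurableSet_le (((hfmeas q).sub (hfmeas r)).abs) measurable_const
      · simp [hr]
    · simp [hq]
  have hAanti : Antitone (fun K : ℕ => (A K)ᶜ) := by
    intro K K' hKK'
    apply Set.compl_subset_compl.mpr
    intro ω hω q r hq hr
    refine (hω q r hq hr).trans ?_
    have hcast : (K:ℝ) ≤ K' := by exact_mod_cast hKK'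
    exact mul_le_mul_of_nonneg_right hcast (Real.rpow_nonneg (abs_nonneg _) _)
  have hAnull : Tendsto (fun K : ℕ => μ ((A K)ᶜ)) atTop (𝓝 0) := by
    have hiInter : μ (⋂ K : ℕ, (A K)ᶜ) = 0 := by
      have hsub : (⋂ K : ℕ, (A K)ᶜ) ⊆ {ω | ¬ ∃ H : ℝ, ∀ u ∈ Set.Icc (0:ℝ) T,
          ∀ v ∈ Set.Icc (0:ℝ) T, |f ω u - f ω v| ≤ H * |u - v| ^ α} := by
        intro ω hω
        simp only [Set.mem_iInter, Set.mem_compl_iff] at hω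
        intro hcon
        obtain ⟨H, hH⟩ := hcon
        refine hω ⌈H⌉₊ ?_
        intro q r hq hr
        refine (hH q hq r hr).trans ?_
        exact mul_le_mul_of_nonneg_right (Nat.le_ceil H) (Real.rpow_nonneg (abs_nonneg _) _)
      exact measure_mono_null hsub (ae_iff.mp hfHolder)
    have h0 := tendsto_measure_iInter_atTop
      (fun K => ((hAmeas K).compl).nullMeasurableSet) hAanti ⟨0, measure_ne_top μ _⟩
    rw [hiInter] at h0
    exact h0
  refine ENNReal.tendsto_nhds_zero.mpr ?_
  intro δ hδ
  obtain ⟨K, hK⟩ := ((ENNReal.tendsto_nhds_zero.mp hAnull) (δ/2)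
    (ENNReal.half_pos hδ.ne')).exists
  have hdecay : Tendsto (fun n : ℕ =>
      ENNReal.ofReal ((K:ℝ) * (c₅ * (n:ℝ) ^ ((1:ℝ)/2 - α)) / ε)) atTop (𝓝 0) := by
    have h3 : Tendsto (fun n : ℕ => (n:ℝ) ^ ((1:ℝ)/2 - α)) atTop (𝓝 0) := by
      have h4 := tendsto_rpow_neg_atTop (y := α - 1/2) (by linarith)
      have h5 := h4.comp (tendsto_natCast_atTop_atTop (R := ℝ))
      have hfun : (fun n : ℕ => (n:ℝ) ^ ((1:ℝ)/2 - α))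
          = fun n : ℕ => (n:ℝ) ^ (-(α - 1/2)) := by
        funext nn; congr 1; ring
      rw [hfun]
      exact h5
    have h6 : Tendsto (fun n : ℕ => (K:ℝ) * (c₅ * (n:ℝ) ^ ((1:ℝ)/2 - α)) / ε)
        atTop (𝓝 0) := by
      have h7 := ((h3.const_mul c₅).const_mul (K:ℝ)).div_const ε
      simpa using h7
    have h8 := ENNReal.tendsto_ofReal h6
    simpa using h8
  have h9 : ∀ᶠ n : ℕ in atTop,
      ENNReal.ofReal ((K:ℝ) * (c₅ * (n:ℝ) ^ ((1:ℝ)/2 - α)) / ε) ≤ δ/2 :=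
    (ENNReal.tendsto_nhds_zero.mp hdecay) (δ/2) (ENNReal.half_pos hδ.ne')
  filter_upwards [h9, eventually_ge_atTop 1] with n hn9 hn1
  have hev : ∀ᶠ m : ℕ in atTop,
      μ {ω : Ω | ε < ⨆ t : Set.Icc (0 : ℝ) T,
        |∑ j ∈ Finset.Icc 1 ⌊(n : ℝ) * (t : ℝ)⌋₊,
          ∑ i ∈ (Finset.Icc 1 ⌊(m : ℝ) * T⌋₊).filter
              (fun i : ℕ => ((j : ℝ) - 1) / n ≤ (i : ℝ) / m ∧ (i : ℝ) / m < (j : ℝ) / n),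
            (f ω ((i : ℝ) / m) - f ω (((j : ℝ) - 1) / n)) * ξ m i ω|} ≤ δ := by
    filter_upwards [eventually_ge_atTop n] with m hm
    calc μ {ω : Ω | ε < ⨆ t : Set.Icc (0 : ℝ) T,
          |∑ j ∈ Finset.Icc 1 ⌊(n : ℝ) * (t : ℝ)⌋₊,
            ∑ i ∈ (Finset.Icc 1 ⌊(m : ℝ) * T⌋₊).filter
                (fun i : ℕ => ((j : ℝ) - 1) / n ≤ (i : ℝ) / m ∧ (i : ℝ) / m < (j : ℝ) / n),
              (f ω ((i : ℝ) / m) - f ω (((j : ℝ) - 1) / n)) * ξ m i ω|}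
        ≤ μ ((A K)ᶜ) + ENNReal.ofReal ((K:ℝ) * (c₅ * (n:ℝ) ^ ((1:ℝ)/2 - α)) / ε) :=
          mainBound T α hT hα hα1 μ ξ hmeas C₀ hC₀ hH2 f hfmeas ε hε K n m hn1 hm
      _ ≤ δ/2 + δ/2 := add_le_add hK hn9
      _ = δ := ENNReal.add_halves δ
  exact Filter.limsup_le_of_le (h := hev)
end
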